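/- arXiv:1902.06808 — 4 statements merged into one kernel-verified Lean document; each statement's English description precedes it below -/
import Mathlib

section
/- Let n = 2^{k+1} with k ≥ 1. Any Hamiltonian cycle on Z_n using only steps of ±1 and n/2 must use at least 2^k − 1 steps of +1 and at least 2^k − 1 steps of −1, unless it uses only +1 steps or only −1 steps (in which case it uses n of them). Consequently, if edges of length 1 have cost 1 and edges of length n/2 have cost 0, every Hamiltonian cycle on Z_n using only these edges costs at least 2^{k+1} − 2. -/
lemma zmod_cycle_const {N : ℕ} [NeZero N] (P : ZMod N → Prop)
    (h : ∀ i, P (i + 1) ↔ P i) (i j : ZMod N) : P i ↔ P j := by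
  have key : ∀ (c : ℕ) (a : ZMod N), P (a + (c : ZMod N)) ↔ P a := by
    intro c
    induction c with
    | zero => simp
    | succ d ih =>
      intro a
      have h1 : a + ((d + 1 : ℕ) : ZMod N) = (a + (d : ZMod N)) + 1 := by
        push_cast; ring
      rw [h1, h, ih]
  have h2 : i + (((j - i).val : ℕ) : ZMod N) = j := by
    rw [ZMod.natCast_rightInverse (j - i)]; ring
  rw [← h2, key]

lemma zmod_cycle_const_eq {N : ℕ} [NeZero N] {α : Type*} (g : ZMod N → α)
    (h : ∀ i, g (i + 1) = g i) (i j : ZMod N) : g i = g j :=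
  (zmod_cycle_const (fun a => g a = g j) (fun a => by show g (a+1) = g j ↔ g a = g j; rw [h]) i j).mpr rfl

lemma zmod_val_add_one {m : ℕ} [NeZero m] (hm : 1 < m) (x : ZMod m)
    (h : x.val + 1 < m) : (x + 1).val = x.val + 1 := by
  rw [ZMod.val_add_of_lt]
  · rw [ZMod.val_one'' (by omega)]
  · rw [ZMod.val_one'' (by omega)]; exact h

lemma zmod_eq_neg_one {m : ℕ} [NeZero m] (x : ZMod m) (h : x.val = m - 1) :
    x = -1 := by
  have h1 : x = ((x.val : ℕ) : ZMod m) := (ZMod.natCast_rightInverse x).symm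
  have hm : 1 ≤ m := Nat.one_le_iff_ne_zero.mpr (NeZero.ne m)
  rw [h1, h, Nat.cast_sub hm, ZMod.natCast_self, Nat.cast_one, zero_sub]

lemma flow_contra {n m : ℕ} [NeZero n] [NeZero m] (hm4 : 4 ≤ m)
    (w : ZMod n → ZMod m) (hwsurj : Function.Surjective w)
    (hstep : ∀ i, w (i + 1) - w i = 0 ∨ w (i + 1) - w i = 1 ∨ w (i + 1) - w i = -1)
    (heq : (Finset.univ.filter (fun i => w (i + 1) - w i = 1)).card
         = (Finset.univ.filter (fun i => w (i + 1) - w i = -1)).card)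
    (hle : (Finset.univ.filter (fun i => w (i + 1) - w i = 1)).card
         + (Finset.univ.filter (fun i => w (i + 1) - w i = -1)).card + 4 ≤ 2 * m) :
    False := by
  classical
  haveI : Fact (1 < m) := ⟨by omega⟩
  have h2m : (2 : ZMod m) ≠ 0 := by
    intro h
    have h' : ((2 : ℕ) : ZMod m) = 0 := by push_cast; exact h
    have := Nat.le_of_dvd (by norm_num) ((ZMod.natCast_eq_zero_iff 2 m).mp h')
    omega
  have hD : ∀ i : ZMod n, w (i + 1) = w i ∨ w (i + 1) = w i + 1 ∨ w (i + 1) = w i - 1 := by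
    intro i
    rcases hstep i with h | h | h
    · exact Or.inl (by linear_combination h)
    · exact Or.inr (Or.inl (by linear_combination h))
    · exact Or.inr (Or.inr (by linear_combination h))
  set p : ZMod m → ℕ := fun r =>
    (Finset.univ.filter (fun i : ZMod n => w i = r ∧ w (i + 1) = r + 1)).card with hp
  set q : ZMod m → ℕ := fun r =>
    (Finset.univ.filter (fun i : ZMod n => w i = r + 1 ∧ w (i + 1) = r)).card with hq
  set z : ZMod m → ℕ := fun r =>
    (Finset.univ.filter (fun i : ZMod n => w i = r ∧ w (i + 1) = r)).card with hz
  -- conservation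
  have hpq : ∀ r : ZMod m, p r + q (r + 1) = p (r + 1) + q r := by
    intro r
    have hne1 : ∀ s : ZMod m, s ≠ s + 1 := by
      intro s h
      exact one_ne_zero (by linear_combination h.symm : (1 : ZMod m) = 0)
    have hne2 : ∀ s : ZMod m, s ≠ s + 1 + 1 := by
      intro s h
      exact h2m (by linear_combination h.symm)
    have hAB : (Finset.univ.filter (fun i : ZMod n => w (i + 1) = r + 1)).card
        = (Finset.univ.filter (fun i : ZMod n => w i = r + 1)).card := by
      apply Finset.card_bij (fun i _ => i + 1)
      · intro a ha
        rw [Finset.mem_filter] at ha ⊢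
        exact ⟨Finset.mem_univ _, ha.2⟩
      · intro a _ b _ h
        exact add_right_cancel h
      · intro c hc
        refine ⟨c - 1, Finset.mem_filter.mpr ⟨Finset.mem_univ _, ?_⟩, by ring⟩
        rw [sub_add_cancel]
        exact (Finset.mem_filter.mp hc).2
    have hA : (Finset.univ.filter (fun i : ZMod n => w (i + 1) = r + 1)) =
        (Finset.univ.filter (fun i : ZMod n => w i = r ∧ w (i + 1) = r + 1)) ∪
        ((Finset.univ.filter (fun i : ZMod n => w i = r + 1 ∧ w (i + 1) = r + 1)) ∪
         (Finset.univ.filter (fun i : ZMod n => w i = r + 1 + 1 ∧ w (i + 1) = r + 1))) := by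
      ext i
      simp only [Finset.mem_filter, Finset.mem_union, Finset.mem_univ, true_and]
      constructor
      · intro h
        rcases hD i with h0 | h1 | h2
        · exact Or.inr (Or.inl ⟨by rw [← h0, h], h⟩)
        · exact Or.inl ⟨add_right_cancel (h1.symm.trans h : w i + 1 = r + 1), h⟩
        · refine Or.inr (Or.inr ⟨?_, h⟩)
          have : w i - 1 = r + 1 := h2.symm.trans h
          linear_combination this
      · rintro (⟨_, h⟩ | ⟨_, h⟩ | ⟨_, h⟩) <;> exact h
    have hB : (Finset.univ.filter (fun i : ZMod n => w i = r + 1)) =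
        (Finset.univ.filter (fun i : ZMod n => w i = r + 1 ∧ w (i + 1) = r + 1 + 1)) ∪
        ((Finset.univ.filter (fun i : ZMod n => w i = r + 1 ∧ w (i + 1) = r + 1)) ∪
         (Finset.univ.filter (fun i : ZMod n => w i = r + 1 ∧ w (i + 1) = r))) := by
      ext i
      simp only [Finset.mem_filter, Finset.mem_union, Finset.mem_univ, true_and]
      constructor
      · intro h
        rcases hD i with h0 | h1 | h2
        · exact Or.inr (Or.inl ⟨h, h0.trans h⟩)
        · exact Or.inl ⟨h, by rw [h1, h]⟩
        · refine Or.inr (Or.inr ⟨h, ?_⟩)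
          rw [h2, h]; ring
      · rintro (⟨h, _⟩ | ⟨h, _⟩ | ⟨h, _⟩) <;> exact h
    have hdA1 : Disjoint
        (Finset.univ.filter (fun i : ZMod n => w i = r ∧ w (i + 1) = r + 1))
        ((Finset.univ.filter (fun i : ZMod n => w i = r + 1 ∧ w (i + 1) = r + 1)) ∪
         (Finset.univ.filter (fun i : ZMod n => w i = r + 1 + 1 ∧ w (i + 1) = r + 1))) := by
      rw [Finset.disjoint_left]
      intro i hi1 hi2
      rw [Finset.mem_filter] at hi1
      rw [Finset.mem_union, Finset.mem_filter, Finset.mem_filter] at hi2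
      rcases hi2 with h | h
      · exact hne1 r (hi1.2.1.symm.trans h.2.1)
      · exact hne2 r (hi1.2.1.symm.trans h.2.1)
    have hdA2 : Disjoint
        (Finset.univ.filter (fun i : ZMod n => w i = r + 1 ∧ w (i + 1) = r + 1))
        (Finset.univ.filter (fun i : ZMod n => w i = r + 1 + 1 ∧ w (i + 1) = r + 1)) := by
      rw [Finset.disjoint_left]
      intro i hi1 hi2
      rw [Finset.mem_filter] at hi1 hi2
      exact hne1 (r + 1) (hi1.2.1.symm.trans hi2.2.1)
    have hdB1 : Disjoint
        (Finset.univ.filter (fun i : ZMod n => w i = r + 1 ∧ w (i + 1) = r + 1 + 1))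
        ((Finset.univ.filter (fun i : ZMod n => w i = r + 1 ∧ w (i + 1) = r + 1)) ∪
         (Finset.univ.filter (fun i : ZMod n => w i = r + 1 ∧ w (i + 1) = r))) := by
      rw [Finset.disjoint_left]
      intro i hi1 hi2
      rw [Finset.mem_filter] at hi1
      rw [Finset.mem_union, Finset.mem_filter, Finset.mem_filter] at hi2
      rcases hi2 with h | h
      · exact hne1 (r + 1) (h.2.2.symm.trans hi1.2.2)
      · exact hne2 r (h.2.2.symm.trans hi1.2.2)
    have hdB2 : Disjoint
        (Finset.univ.filter (fun i : ZMod n => w i = r + 1 ∧ w (i + 1) = r + 1))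
        (Finset.univ.filter (fun i : ZMod n => w i = r + 1 ∧ w (i + 1) = r)) := by
      rw [Finset.disjoint_left]
      intro i hi1 hi2
      rw [Finset.mem_filter] at hi1 hi2
      exact hne1 r (hi2.2.2.symm.trans hi1.2.2)
    have eA := hAB
    rw [hA, hB, Finset.card_union_of_disjoint hdA1, Finset.card_union_of_disjoint hdA2,
      Finset.card_union_of_disjoint hdB1, Finset.card_union_of_disjoint hdB2] at eA
    -- eA : p r + (z (r+1) + q (r+1)) = p (r+1) + (z (r+1) + q r)
    simp only [hp, hq, hz] at *
    omega
  -- p - q is constant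
  set g : ZMod m → ℤ := fun r => (p r : ℤ) - q r with hg
  have hgstep : ∀ r, g (r + 1) = g r := by
    intro r
    have := hpq r
    simp only [hg]
    omega
  have hgconst : ∀ r, g r = g 0 := fun r => zmod_cycle_const_eq g hgstep r 0
  -- fiberwise sums
  have hsp : (Finset.univ.filter (fun i : ZMod n => w (i + 1) - w i = 1)).card
      = ∑ r : ZMod m, p r := by
    rw [Finset.card_eq_sum_card_fiberwise
      (f := fun i : ZMod n => w i) (t := Finset.univ) (fun i _ => Finset.mem_univ _)]
    apply Finset.sum_congr rfl
    intro r _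
    congr 1
    ext i
    simp only [Finset.mem_filter, Finset.mem_univ, true_and]
    constructor
    · rintro ⟨h1, h2⟩
      exact ⟨h2, by rw [sub_eq_iff_eq_add] at h1; rw [h1, h2]; ring⟩
    · rintro ⟨h1, h2⟩
      exact ⟨by rw [h1, h2]; ring, h1⟩
  have hsq : (Finset.univ.filter (fun i : ZMod n => w (i + 1) - w i = -1)).card
      = ∑ r : ZMod m, q r := by
    rw [Finset.card_eq_sum_card_fiberwise
      (f := fun i : ZMod n => w i - 1) (t := Finset.univ) (fun i _ => Finset.mem_univ _)]
    apply Finset.sum_congr rfl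
    intro r _
    congr 1
    ext i
    simp only [Finset.mem_filter, Finset.mem_univ, true_and]
    constructor
    · rintro ⟨h1, h2⟩
      rw [sub_eq_iff_eq_add] at h2
      refine ⟨h2, ?_⟩
      rw [sub_eq_iff_eq_add] at h1
      rw [h1, h2]; ring
    · rintro ⟨h1, h2⟩
      constructor
      · rw [h1, h2]; ring
      · rw [h1]; ring
  -- g is identically 0
  have hg0 : g 0 = 0 := by
    have hsum : (m : ℤ) * g 0 = 0 := by
      calc (m : ℤ) * g 0 = ∑ _r : ZMod m, g 0 := by
            rw [Finset.sum_const, Finset.card_univ, ZMod.card, nsmul_eq_mul]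
        _ = ∑ r : ZMod m, g r := Finset.sum_congr rfl (fun r _ => (hgconst r).symm)
        _ = (∑ r : ZMod m, (p r : ℤ)) - ∑ r : ZMod m, (q r : ℤ) := by
            rw [← Finset.sum_sub_distrib]
        _ = 0 := by
            rw [← Nat.cast_sum, ← Nat.cast_sum, ← hsp, ← hsq, heq, sub_self]
    rcases mul_eq_zero.mp hsum with h | h
    · exact absurd h (by exact_mod_cast (NeZero.ne m))
    · exact h
  have hpq0 : ∀ r, p r = q r := by
    intro r
    have h1 := hgconst r
    rw [hg0] at h1
    simp only [hg, sub_eq_zero] at h1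
    exact_mod_cast h1
  -- at least two vertices with p = 0
  set Zs := Finset.univ.filter (fun r : ZMod m => p r = 0) with hZs
  have hZ2 : 2 ≤ Zs.card := by
    by_contra hcon
    push_neg at hcon
    have hfc : Zs.card + (Finset.univ.filter (fun r : ZMod m => ¬ p r = 0)).card
        = m := by
      rw [hZs, Finset.card_filter_add_card_filter_not, Finset.card_univ, ZMod.card]
    have hlb : 2 * (Finset.univ.filter (fun r : ZMod m => ¬ p r = 0)).card
        ≤ ∑ r : ZMod m, (p r + q r) := by
      calc 2 * (Finset.univ.filter (fun r : ZMod m => ¬ p r = 0)).card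
          = ∑ _r ∈ Finset.univ.filter (fun r : ZMod m => ¬ p r = 0), 2 := by
            rw [Finset.sum_const]; ring
        _ ≤ ∑ r ∈ Finset.univ.filter (fun r : ZMod m => ¬ p r = 0), (p r + q r) := by
            apply Finset.sum_le_sum
            intro r hr
            rw [Finset.mem_filter] at hr
            have := hpq0 r
            omega
        _ ≤ ∑ r : ZMod m, (p r + q r) := by
            apply Finset.sum_le_sum_of_subset
            exact Finset.filter_subset _ _
    rw [Finset.sum_add_distrib, ← hsp, ← hsq] at hlb
    omega
  obtain ⟨a, ha, b, hb, hab⟩ := Finset.one_lt_card.mp (by omega : 1 < Zs.card)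
  rw [hZs, Finset.mem_filter] at ha hb
  have hqa : q a = 0 := (hpq0 a).symm.trans ha.2
  have hqb : q b = 0 := (hpq0 b).symm.trans hb.2
  have hforall : ∀ (r : ZMod m), p r = 0 →
      ∀ i : ZMod n, ¬ (w i = r ∧ w (i + 1) = r + 1) := by
    intro r hr i hcontra
    have hmem : i ∈ Finset.univ.filter (fun i : ZMod n => w i = r ∧ w (i + 1) = r + 1) :=
      Finset.mem_filter.mpr ⟨Finset.mem_univ i, hcontra⟩
    rw [Finset.card_eq_zero.mp hr] at hmem
    exact absurd hmem (Finset.notMem_empty i)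
  have hforallq : ∀ (r : ZMod m), q r = 0 →
      ∀ i : ZMod n, ¬ (w i = r + 1 ∧ w (i + 1) = r) := by
    intro r hr i hcontra
    have hmem : i ∈ Finset.univ.filter (fun i : ZMod n => w i = r + 1 ∧ w (i + 1) = r) :=
      Finset.mem_filter.mpr ⟨Finset.mem_univ i, hcontra⟩
    rw [Finset.card_eq_zero.mp hr] at hmem
    exact absurd hmem (Finset.notMem_empty i)
  have pa0 := hforall a ha.2
  have pb0 := hforall b hb.2
  have qa0 := hforallq a hqa
  have qb0 := hforallq b hqb
  -- the cut argument
  set d : ℕ := (b - (a + 1)).val with hd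
  have hdm : d + 1 < m := by
    have h1 : d < m := ZMod.val_lt _
    have h2 : d ≠ m - 1 := by
      intro h
      have hb1 : b - (a + 1) = -1 := zmod_eq_neg_one _ (hd.symm.trans h)
      exact hab (by linear_combination -hb1)
    omega
  set P : ZMod n → Prop := fun i => (w i - (a + 1)).val ≤ d with hP
  have hPstep : ∀ i, P (i + 1) ↔ P i := by
    intro i
    rcases hD i with h0 | h1 | h2
    · show (w (i + 1) - (a + 1)).val ≤ d ↔ (w i - (a + 1)).val ≤ d
      rw [h0]
    · -- step +1
      have hx' : w (i + 1) - (a + 1) = (w i - (a + 1)) + 1 := by rw [h1]; ring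
      have hxne : w i - (a + 1) ≠ -1 := by
        intro hc
        have hwi : w i = a := by linear_combination hc
        exact pa0 i ⟨hwi, by rw [h1, hwi]⟩
      have hxd : (w i - (a + 1)).val ≠ d := by
        intro hc
        have hxb : w i - (a + 1) = b - (a + 1) := by
          calc w i - (a + 1) = (((w i - (a + 1)).val : ℕ) : ZMod m) :=
                (ZMod.natCast_rightInverse _).symm
            _ = ((d : ℕ) : ZMod m) := by rw [hc]
            _ = b - (a + 1) := ZMod.natCast_rightInverse _
        have hwi : w i = b := by linear_combination hxb
        exact pb0 i ⟨hwi, by rw [h1, hwi]⟩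
      have hxlt : (w i - (a + 1)).val + 1 < m := by
        have hlt := ZMod.val_lt (w i - (a + 1))
        have hne : (w i - (a + 1)).val ≠ m - 1 := fun h => hxne (zmod_eq_neg_one _ h)
        omega
      have hval : (w (i + 1) - (a + 1)).val = (w i - (a + 1)).val + 1 := by
        rw [hx']
        exact zmod_val_add_one (by omega) _ hxlt
      show (w (i + 1) - (a + 1)).val ≤ d ↔ (w i - (a + 1)).val ≤ d
      rw [hval]
      omega
    · -- step -1
      have hx' : w i - (a + 1) = (w (i + 1) - (a + 1)) + 1 := by rw [h2]; ring
      have hyne : w (i + 1) - (a + 1) ≠ -1 := by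
        intro hc
        have hwi1 : w (i + 1) = a := by linear_combination hc
        exact qa0 i ⟨by rw [h2] at hwi1; linear_combination hwi1, hwi1⟩
      have hyd : (w (i + 1) - (a + 1)).val ≠ d := by
        intro hc
        have hxb : w (i + 1) - (a + 1) = b - (a + 1) := by
          calc w (i + 1) - (a + 1) = (((w (i + 1) - (a + 1)).val : ℕ) : ZMod m) :=
                (ZMod.natCast_rightInverse _).symm
            _ = ((d : ℕ) : ZMod m) := by rw [hc]
            _ = b - (a + 1) := ZMod.natCast_rightInverse _
        have hwi1 : w (i + 1) = b := by linear_combination hxb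
        exact qb0 i ⟨by rw [h2] at hwi1; linear_combination hwi1, hwi1⟩
      have hylt : (w (i + 1) - (a + 1)).val + 1 < m := by
        have hlt := ZMod.val_lt (w (i + 1) - (a + 1))
        have hne : (w (i + 1) - (a + 1)).val ≠ m - 1 := fun h => hyne (zmod_eq_neg_one _ h)
        omega
      have hval : (w i - (a + 1)).val = (w (i + 1) - (a + 1)).val + 1 := by
        rw [hx']
        exact zmod_val_add_one (by omega) _ hylt
      show (w (i + 1) - (a + 1)).val ≤ d ↔ (w i - (a + 1)).val ≤ d
      rw [hval]
      omega
  obtain ⟨i₀, hi₀⟩ := hwsurj (a + 1)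
  obtain ⟨i₁, hi₁⟩ := hwsurj (b + 1)
  have hP0 : P i₀ := by
    show (w i₀ - (a + 1)).val ≤ d
    rw [hi₀, sub_self, ZMod.val_zero]
    omega
  have hP1 : ¬ P i₁ := by
    show ¬ ((w i₁ - (a + 1)).val ≤ d)
    have he : w i₁ - (a + 1) = (b - (a + 1)) + 1 := by rw [hi₁]; ring
    rw [he, zmod_val_add_one (by omega) _ (by omega : (b - (a + 1)).val + 1 < m)]
    rw [← hd]
    omega
  exact hP1 ((zmod_cycle_const P hPstep i₁ i₀).mpr hP0)

/-- For `n = 2^{k+1}`, any Hamiltonian cycle on `ZMod n` with steps in `{+1, −1, +2^k}`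
either uses only `+1` steps (`n` of them), or only `−1` steps (`n` of them), or uses at
least `2^k − 1` steps of each; consequently it uses at least `2^{k+1} − 2` steps of
length one, i.e. costs at least `2^{k+1} − 2` when length-one edges cost `1` and
length-`n/2` edges cost `0`. -/
theorem stmt_8 (k : ℕ) (hk : 1 ≤ k) (n : ℕ) [NeZero n] (hn : n = 2 ^ (k + 1))
    (v : ZMod n → ZMod n) (hbij : Function.Bijective v)
    (hstep : ∀ i : ZMod n, v (i + 1) - v i ∈ ({1, -1, (2 ^ k : ZMod n)} : Set (ZMod n)))
    (s₁ s₂ : ℕ)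
    (hs₁ : s₁ = (Finset.univ.filter (fun i : ZMod n => v (i + 1) - v i = 1)).card)
    (hs₂ : s₂ = (Finset.univ.filter (fun i : ZMod n => v (i + 1) - v i = -1)).card) :
    ((s₁ = n ∧ s₂ = 0) ∨ (s₂ = n ∧ s₁ = 0) ∨ (2 ^ k - 1 ≤ s₁ ∧ 2 ^ k - 1 ≤ s₂)) ∧
    2 ^ (k + 1) - 2 ≤ s₁ + s₂ := by
  classical
  set M : ℕ := 2 ^ k with hMdef
  have hM2 : 2 ≤ M := by
    calc 2 = 2 ^ 1 := by norm_num
    _ ≤ 2 ^ k := Nat.pow_le_pow_right (by norm_num) hk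
  have hnM : n = 2 * M := by rw [hn, hMdef, pow_succ]; ring
  have hn4 : 4 ≤ n := by omega
  -- basic distinctness in ZMod n
  have hcast0 : ∀ a : ℕ, ((a : ZMod n) = 0) ↔ n ∣ a := fun a =>
    ZMod.natCast_eq_zero_iff a n
  have h2ne : (2 : ZMod n) ≠ 0 := by
    intro h
    have : ((2 : ℕ) : ZMod n) = 0 := by push_cast; exact h
    have := (hcast0 2).mp this
    have := Nat.le_of_dvd (by norm_num) this
    omega
  have h1m : (1 : ZMod n) ≠ -1 := by
    intro h
    apply h2ne
    linear_combination h
  have hMcast : ((2 : ZMod n)) ^ k = ((M : ℕ) : ZMod n) := by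
    rw [hMdef]; push_cast; ring
  have h1h : (1 : ZMod n) ≠ (2 : ZMod n) ^ k := by
    intro h
    rw [hMcast] at h
    have h' : ((M - 1 : ℕ) : ZMod n) = 0 := by
      push_cast [Nat.cast_sub (by omega : 1 ≤ M)]
      rw [← h]; ring
    have := (hcast0 _).mp h'
    have := Nat.eq_zero_of_dvd_of_lt this (by omega)
    omega
  have hmh : (-1 : ZMod n) ≠ (2 : ZMod n) ^ k := by
    intro h
    rw [hMcast] at h
    have h' : ((M + 1 : ℕ) : ZMod n) = 0 := by
      push_cast
      rw [← h]; ring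
    have := (hcast0 _).mp h'
    have := Nat.le_of_dvd (by omega) this
    omega
  -- the three step sets
  set S1 := Finset.univ.filter (fun i : ZMod n => v (i + 1) - v i = 1) with hS1
  set S2 := Finset.univ.filter (fun i : ZMod n => v (i + 1) - v i = -1) with hS2
  set S3 := Finset.univ.filter (fun i : ZMod n => v (i + 1) - v i = (2:ZMod n) ^ k) with hS3
  set s₃ := S3.card with hs₃
  have hstep' : ∀ i : ZMod n, v (i + 1) - v i = 1 ∨ v (i + 1) - v i = -1 ∨
      v (i + 1) - v i = (2:ZMod n) ^ k := by
    intro i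
    have := hstep i
    simpa [Set.mem_insert_iff] using this
  have hd12 : Disjoint S1 S2 := by
    rw [Finset.disjoint_left]
    intro i hi1 hi2
    rw [hS1, Finset.mem_filter] at hi1
    rw [hS2, Finset.mem_filter] at hi2
    exact h1m (hi1.2.symm.trans hi2.2)
  have hd13 : Disjoint S1 S3 := by
    rw [Finset.disjoint_left]
    intro i hi1 hi2
    rw [hS1, Finset.mem_filter] at hi1
    rw [hS3, Finset.mem_filter] at hi2
    exact h1h (hi1.2.symm.trans hi2.2)
  have hd23 : Disjoint S2 S3 := by
    rw [Finset.disjoint_left]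
    intro i hi1 hi2
    rw [hS2, Finset.mem_filter] at hi1
    rw [hS3, Finset.mem_filter] at hi2
    exact hmh (hi1.2.symm.trans hi2.2)
  have hunion : Finset.univ = S1 ∪ S2 ∪ S3 := by
    ext i
    simp only [Finset.mem_union, hS1, hS2, hS3, Finset.mem_filter, Finset.mem_univ, true_and,
      iff_true]
    have := hstep' i
    tauto
  have hcardsum : s₁ + s₂ + s₃ = n := by
    rw [hs₁, hs₂, hs₃]
    rw [← Finset.card_union_of_disjoint hd12, ← Finset.card_union_of_disjoint (by
      rw [Finset.disjoint_union_left]; exact ⟨hd13, hd23⟩), ← hunion]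
    simp [Finset.card_univ, ZMod.card]
  -- telescoping sum
  have htel : ∑ i : ZMod n, v (i + 1) = ∑ i : ZMod n, v i :=
    Fintype.sum_equiv (Equiv.addRight (1 : ZMod n)) _ _ (fun i => rfl)
  have hsum0 : ∑ i : ZMod n, (v (i + 1) - v i) = 0 := by
    rw [Finset.sum_sub_distrib, htel, sub_self]
  have hsum1 : ∑ i ∈ S1, (v (i + 1) - v i) = (s₁ : ZMod n) := by
    rw [Finset.sum_congr rfl (fun i hi => (by rw [hS1, Finset.mem_filter] at hi; exact hi.2 :
      v (i+1) - v i = 1)), Finset.sum_const, hs₁]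
    simp
  have hsum2 : ∑ i ∈ S2, (v (i + 1) - v i) = -(s₂ : ZMod n) := by
    rw [Finset.sum_congr rfl (fun i hi => (by rw [hS2, Finset.mem_filter] at hi; exact hi.2 :
      v (i+1) - v i = -1)), Finset.sum_const, hs₂]
    simp
  have hsum3 : ∑ i ∈ S3, (v (i + 1) - v i) = (s₃ : ZMod n) * (M : ZMod n) := by
    rw [Finset.sum_congr rfl (fun i hi => (by rw [hS3, Finset.mem_filter] at hi; exact hi.2 :
      v (i+1) - v i = (2:ZMod n)^k)), Finset.sum_const, hs₃, hMcast]
    simp [mul_comm]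
  have hkey : (s₁ : ZMod n) - (s₂ : ZMod n) + (s₃ : ZMod n) * (M : ZMod n) = 0 := by
    have := hsum0
    rw [hunion, Finset.sum_union (by rw [Finset.disjoint_union_left]; exact ⟨hd13, hd23⟩),
      Finset.sum_union hd12, hsum1, hsum2, hsum3] at this
    linear_combination this
  have hdvd : (n : ℤ) ∣ ((s₁ : ℤ) - s₂ + s₃ * M) := by
    rw [← ZMod.intCast_zmod_eq_zero_iff_dvd]
    push_cast
    exact hkey
  -- integer case analysis
  obtain ⟨t, ht⟩ := hdvd
  have hM' : ∃ M' : ℕ, M = 2 * M' := ⟨2 ^ (k - 1), by rw [hMdef, ← pow_succ']; congr 1; omega⟩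
  obtain ⟨M', hM'⟩ := hM'
  have hs3even : 2 ∣ s₃ := by
    have h2 : (2:ℤ) ∣ ((s₁ : ℤ) - s₂) := ⟨(2 * M' * t - s₃ * M'), by
      have : (M : ℤ) = 2 * M' := by exact_mod_cast hM'
      rw [this] at ht
      have : (n : ℤ) = 2 * (2 * M') := by rw [hnM, hM']; push_cast; ring
      rw [this] at ht
      linarith⟩
    omega
  obtain ⟨u, hu⟩ := hs3even
  have hc : (s₁ : ℤ) - s₂ = 2 * M * (t - u) := by
    have h1 : (s₃ : ℤ) = 2 * u := by exact_mod_cast hu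
    have h2 : (n : ℤ) = 2 * M := by exact_mod_cast hnM
    rw [h1, h2] at ht
    linarith [ht]
  -- final case analysis
  rcases Nat.eq_zero_or_pos u with hu0 | hupos
  · -- s₃ = 0
    have hs30 : s₃ = 0 := by omega
    have hM0 : (0 : ℤ) < 2 * M := by positivity
    have hup : (s₁ : ℤ) - s₂ ≤ 2 * M := by
      have h1 : s₁ ≤ 2 * M := by omega
      omega
    have hlow : -(2 * M) ≤ (s₁ : ℤ) - s₂ := by
      have h1 : s₂ ≤ 2 * M := by omega
      omega
    have hcle : t - u ≤ 1 := by
      have h1 : 2 * (M:ℤ) * (t - u) ≤ 2 * M * 1 := by rw [← hc]; linarith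
      exact le_of_mul_le_mul_left h1 hM0
    have hcge : -1 ≤ t - u := by
      have h1 : 2 * (M:ℤ) * (-1) ≤ 2 * M * (t - u) := by rw [← hc]; linarith
      exact le_of_mul_le_mul_left h1 hM0
    have hctri : t - u = -1 ∨ t - u = 0 ∨ t - u = 1 := by omega
    rcases hctri with hc1 | hc1 | hc1
    · rw [hc1] at hc
      have hD : (s₁ : ℤ) - s₂ = -(2 * M) := by linarith
      rw [← hn]
      refine ⟨Or.inr (Or.inl ⟨by omega, by omega⟩), by omega⟩
    · -- mixed, no diagonal steps: impossible
      exfalso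
      rw [hc1] at hc
      have hDz : s₁ = s₂ := by omega
      have hs1M : s₁ = M := by omega
      have hS3e : S3 = ∅ := Finset.card_eq_zero.mp (by omega)
      have hno3 : ∀ i : ZMod n, v (i + 1) - v i ≠ (2:ZMod n) ^ k := by
        intro i h
        have : i ∈ S3 := by rw [hS3, Finset.mem_filter]; exact ⟨Finset.mem_univ i, h⟩
        rw [hS3e] at this
        exact absurd this (Finset.notMem_empty i)
      have hdi : ∀ i : ZMod n, v (i + 1) - v i = 1 ∨ v (i + 1) - v i = -1 := by
        intro i
        rcases hstep' i with h | h | h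
        · exact Or.inl h
        · exact Or.inr h
        · exact absurd h (hno3 i)
      set P : ZMod n → Prop := fun i => v (i + 1) - v i = 1 with hP
      have hnc : ¬ (∀ i, P (i + 1) ↔ P i) := by
        intro hcon
        obtain ⟨i₁, hi₁⟩ := Finset.card_pos.mp (by omega : 0 < S1.card)
        obtain ⟨i₂, hi₂⟩ := Finset.card_pos.mp (by omega : 0 < S2.card)
        rw [hS1, Finset.mem_filter] at hi₁
        rw [hS2, Finset.mem_filter] at hi₂
        have hPi₁ : P i₁ := hi₁.2
        have hPi₂ : P i₂ := (zmod_cycle_const P hcon i₂ i₁).mpr hPi₁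
        exact h1m (hPi₂.symm.trans hi₂.2)
      obtain ⟨i, hi⟩ := not_forall.mp hnc
      rcases hdi i with ha | ha <;> rcases hdi (i + 1) with hb | hb
      · exact hi (by constructor <;> intro <;> assumption)
      · have hv : v (i + 1 + 1) = v i := by linear_combination ha + hb
        have := hbij.injective hv
        exact h2ne (by linear_combination this)
      · have hv : v (i + 1 + 1) = v i := by linear_combination ha + hb
        have := hbij.injective hv
        exact h2ne (by linear_combination this)
      · refine hi ?_
        constructor
        · intro h; exact absurd (h.symm.trans hb) h1m
        · intro h; exact absurd (h.symm.trans ha) h1m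
    · rw [hc1] at hc
      have hD : (s₁ : ℤ) - s₂ = 2 * M := by linarith
      rw [← hn]
      refine ⟨Or.inl ⟨by omega, by omega⟩, by omega⟩
  · -- s₃ = 2u > 0
    have hub : (s₁ : ℤ) + s₂ = 2 * M - 2 * u := by
      have h1 : s₁ + s₂ + 2 * u = 2 * M := by omega
      omega
    have hM0 : (0 : ℤ) < 2 * M := by positivity
    have hclt : t - u < 1 := by
      have h1 : 2 * (M:ℤ) * (t - u) < 2 * M * 1 := by
        rw [← hc]
        have : (0:ℤ) ≤ s₂ := by positivity
        omega
      exact lt_of_mul_lt_mul_left h1 (by positivity)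
    have hcgt : (-1 : ℤ) < t - u := by
      have h1 : 2 * (M:ℤ) * (-1) < 2 * M * (t - u) := by
        rw [← hc]
        have : (0:ℤ) ≤ s₁ := by positivity
        omega
      exact lt_of_mul_lt_mul_left h1 (by positivity)
    have hc0 : t - u = 0 := by omega
    rw [hc0, mul_zero] at hc
    have hDz : s₁ = s₂ := by omega
    have hs1u : s₁ + u = M := by omega
    rcases eq_or_lt_of_le (Nat.succ_le_of_lt hupos) with hu1 | hu2
    · -- u = 1 : the generic optimal case
      rw [← hn]
      refine ⟨Or.inr (Or.inr ⟨by omega, by omega⟩), by omega⟩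
    · -- u ≥ 2 : impossible
      exfalso
      rcases eq_or_lt_of_le (by omega : u ≤ M) with huM | huM
      · -- u = M : all steps diagonal
        have hs10 : S1.card = 0 := by omega
        have hs20 : S2.card = 0 := by omega
        have hS1e : S1 = ∅ := Finset.card_eq_zero.mp hs10
        have hS2e : S2 = ∅ := Finset.card_eq_zero.mp hs20
        have hall : ∀ i : ZMod n, v (i + 1) - v i = (2:ZMod n) ^ k := by
          intro i
          rcases hstep' i with h | h | h
          · exfalso
            have : i ∈ S1 := by rw [hS1, Finset.mem_filter]; exact ⟨Finset.mem_univ i, h⟩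
            rw [hS1e] at this; exact absurd this (Finset.notMem_empty i)
          · exfalso
            have : i ∈ S2 := by rw [hS2, Finset.mem_filter]; exact ⟨Finset.mem_univ i, h⟩
            rw [hS2e] at this; exact absurd this (Finset.notMem_empty i)
          · exact h
        have h2M0 : (2:ZMod n) ^ k + (2:ZMod n) ^ k = 0 := by
          have h1 : ((2 * M : ℕ) : ZMod n) = 0 := by rw [← hnM]; exact ZMod.natCast_self n
          push_cast at h1
          rw [hMcast]
          linear_combination h1
        have hv : v ((0:ZMod n) + 1 + 1) = v 0 := by
          linear_combination hall 0 + hall (0 + 1) + h2M0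
        have := hbij.injective hv
        exact h2ne (by linear_combination this)
      · -- 2 ≤ u < M : flow argument
        have hk2 : 2 ≤ k := by
          by_contra hcon
          push_neg at hcon
          have hMle : M ≤ 2 := by
            rw [hMdef]
            calc 2 ^ k ≤ 2 ^ 1 := Nat.pow_le_pow_right (by norm_num) (by omega)
            _ = 2 := by norm_num
          omega
        have hM4 : 4 ≤ M := by
          calc 4 = 2 ^ 2 := by norm_num
          _ ≤ 2 ^ k := Nat.pow_le_pow_right (by norm_num) hk2
          _ = M := hMdef.symm
        haveI : NeZero M := ⟨by omega⟩
        haveI : Fact (1 < M) := ⟨by omega⟩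
        have hdvdMn : M ∣ n := ⟨2, by omega⟩
        set w : ZMod n → ZMod M := fun i => ZMod.castHom hdvdMn (ZMod M) (v i) with hw
        have h2mM : (2 : ZMod M) ≠ 0 := by
          intro h
          have h' : ((2 : ℕ) : ZMod M) = 0 := by push_cast; exact h
          have := Nat.le_of_dvd (by norm_num) ((ZMod.natCast_eq_zero_iff 2 M).mp h')
          omega
        have hcast2k : (ZMod.castHom hdvdMn (ZMod M)) ((2:ZMod n) ^ k) = 0 := by
          rw [map_pow, map_ofNat]
          have h1 : ((2:ZMod M)) ^ k = ((2 ^ k : ℕ) : ZMod M) := by push_cast; ring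
          rw [h1, ← hMdef, ZMod.natCast_self]
        have hwd : ∀ i : ZMod n, w (i + 1) - w i
            = (ZMod.castHom hdvdMn (ZMod M)) (v (i + 1) - v i) := by
          intro i
          rw [map_sub]
        have hwiff1 : ∀ i : ZMod n, (w (i + 1) - w i = 1 ↔ v (i + 1) - v i = 1) := by
          intro i
          constructor
          · intro h
            rcases hstep' i with h' | h' | h'
            · exact h'
            · exfalso
              rw [hwd, h', map_neg, map_one] at h
              exact h2mM (by linear_combination -h)
            · exfalso
              rw [hwd, h', hcast2k] at h
              exact one_ne_zero h.symm
          · intro h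
            rw [hwd, h, map_one]
        have hwiff2 : ∀ i : ZMod n, (w (i + 1) - w i = -1 ↔ v (i + 1) - v i = -1) := by
          intro i
          constructor
          · intro h
            rcases hstep' i with h' | h' | h'
            · exfalso
              rw [hwd, h', map_one] at h
              exact h2mM (by linear_combination h)
            · exact h'
            · exfalso
              rw [hwd, h', hcast2k] at h
              exact one_ne_zero (by linear_combination h)
          · intro h
            rw [hwd, h, map_neg, map_one]
        have hwstep3 : ∀ i : ZMod n, w (i + 1) - w i = 0 ∨ w (i + 1) - w i = 1
            ∨ w (i + 1) - w i = -1 := by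
          intro i
          rcases hstep' i with h | h | h
          · exact Or.inr (Or.inl ((hwiff1 i).mpr h))
          · exact Or.inr (Or.inr ((hwiff2 i).mpr h))
          · exact Or.inl (by rw [hwd, h, hcast2k])
        have hwsurj : Function.Surjective w := by
          intro tt
          obtain ⟨i, hi⟩ := hbij.surjective ((tt.val : ℕ) : ZMod n)
          refine ⟨i, ?_⟩
          rw [hw]
          show (ZMod.castHom hdvdMn (ZMod M)) (v i) = tt
          rw [hi, map_natCast]
          exact ZMod.natCast_rightInverse tt
        have hwcard1 : (Finset.univ.filter (fun i : ZMod n => w (i + 1) - w i = 1)).card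
            = s₁ := by
          rw [hs₁, hS1]
          congr 1
          ext i
          simp only [Finset.mem_filter, Finset.mem_univ, true_and]
          exact hwiff1 i
        have hwcard2 : (Finset.univ.filter (fun i : ZMod n => w (i + 1) - w i = -1)).card
            = s₂ := by
          rw [hs₂, hS2]
          congr 1
          ext i
          simp only [Finset.mem_filter, Finset.mem_univ, true_and]
          exact hwiff2 i
        exact flow_contra hM4 w hwsurj hwstep3
          (by rw [hwcard1, hwcard2]; omega)
          (by rw [hwcard1, hwcard2]; omega)
end

section
/- Let n ≥ 3, d = ⌊n/2⌋, and let φ be a permutation of {1,...,d}. Define g_0 = n and g_i = gcd(g_{i−1}, φ(i)). Define edge weights x on K_n (vertices Z_n) by: every edge of length φ(i) gets weight (g_{i−1} − g_i)/n if i < ℓ (doubled if φ(i) = n/2), weight g_{ℓ−1}/n if i = ℓ (doubled if φ(ℓ) = n/2), and weight 0 for i > ℓ, where ℓ = min{i : g_i = 1}. Then x satisfies the degree constraints: for every vertex v, Σ_{e ∈ δ(v)} x_e = 2. -/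
open scoped Classical in
/-- The explicit subtour-LP solution of Theorem 3.1 satisfies the degree constraints:
with `g_0 = n`, `g_i = gcd(g_{i−1}, φ(i))`, `ℓ = min{i : g_i = 1}`, giving every edge of
length `φ(i)` weight `(g_{i−1} − g_i)/n` for `i < ℓ`, `g_{ℓ−1}/n` for `i = ℓ` (doubled
when `φ(i) = n/2`), and `0` for `i > ℓ`, every vertex has weighted degree `2`. -/
theorem stmt_10 (n : ℕ) (hn : 3 ≤ n) [NeZero n] (φ : ℕ → ℕ)
    (hφ : Set.BijOn φ (Set.Icc 1 (n / 2)) (Set.Icc 1 (n / 2)))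
    (g : ℕ → ℕ) (hg0 : g 0 = n)
    (hg : ∀ i, 1 ≤ i → g i = Nat.gcd (g (i - 1)) (φ i))
    (ℓ : ℕ) (hℓ1 : g ℓ = 1) (hℓmin : ∀ i < ℓ, g i ≠ 1)
    (x : Sym2 (ZMod n) → ℝ)
    (hx : ∀ u v : ZMod n, u ≠ v → ∀ i, 1 ≤ i → i ≤ n / 2 →
      φ i = min (u - v).val (v - u).val →
      x s(u, v) = (if i < ℓ then ((g (i - 1) : ℝ) - g i) / n
          else if i = ℓ then (g (i - 1) : ℝ) / n else 0) *
        (if 2 * φ i = n then 2 else 1)) :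
    ∀ w : ZMod n,
      (∑ e ∈ Finset.univ.filter
          (fun e : Sym2 (ZMod n) => w ∈ e ∧ ¬ e.IsDiag), x e) = 2 := by
  intro w
  have hn0 : 0 < n := by omega
  set d := n / 2 with hd
  set L : ZMod n → ℕ := fun v => min (w - v).val (v - w).val with hLdef
  set base : ℕ → ℝ := fun i => (if i < ℓ then ((g (i - 1) : ℝ) - g i) / n
          else if i = ℓ then (g (i - 1) : ℝ) / n else 0) with hbase
  -- Step A: sum over edges = sum over other endpoints
  have hA : (∑ e ∈ Finset.univ.filter
          (fun e : Sym2 (ZMod n) => w ∈ e ∧ ¬ e.IsDiag), x e)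
      = ∑ v ∈ Finset.univ.erase w, x s(w, v) := by
    refine (Finset.sum_bij (fun v _ => s(w, v)) ?_ ?_ ?_ ?_).symm
    · intro v hv
      have hvw : v ≠ w := Finset.ne_of_mem_erase hv
      simp only [Finset.mem_filter, Finset.mem_univ, true_and]
      exact ⟨Sym2.mem_mk_left _ _, by simp [Sym2.mk_isDiag_iff, hvw.symm]⟩
    · intro a _ b _ hab
      exact Sym2.congr_right.mp hab
    · intro e he
      simp only [Finset.mem_filter, Finset.mem_univ, true_and] at he
      obtain ⟨hwe, hdiag⟩ := he
      induction e using Sym2.ind with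
      | _ a b =>
        have hab : a ≠ b := by simpa [Sym2.mk_isDiag_iff] using hdiag
        rcases Sym2.mem_iff.mp hwe with h | h
        · subst h
          exact ⟨b, Finset.mem_erase.mpr ⟨hab.symm, Finset.mem_univ _⟩, rfl⟩
        · subst h
          exact ⟨a, Finset.mem_erase.mpr ⟨hab, Finset.mem_univ _⟩, Sym2.eq_swap⟩
    · intro v _; rfl
  rw [hA]
  -- lengths lie in [1, d]
  have hval_sub : ∀ v : ZMod n, v ≠ w → (w - v).val = n - (v - w).val := by
    intro v hv
    have h1 : v - w ≠ 0 := sub_ne_zero.mpr hv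
    have : w - v = -(v - w) := by ring
    rw [this, ZMod.neg_val, if_neg h1]
  have hmaps : ∀ v ∈ Finset.univ.erase w, L v ∈ Finset.Icc 1 d := by
    intro v hv
    have hvw : v ≠ w := Finset.ne_of_mem_erase hv
    have h1 : v - w ≠ 0 := sub_ne_zero.mpr hvw
    have h2 : (v - w).val ≠ 0 := fun h => h1 (ZMod.val_eq_zero _ |>.mp h)
    have h3 : (v - w).val < n := ZMod.val_lt _
    have h4 : (w - v).val = n - (v - w).val := hval_sub v hvw
    simp only [Finset.mem_Icc, hLdef]
    constructor
    · omega
    · have : min (w - v).val (v - w).val ≤ n / 2 := by omega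
      exact this
  rw [← Finset.sum_fiberwise_of_maps_to hmaps]
  -- the fibers
  have hfiber : ∀ k, 1 ≤ k → k ≤ d →
      (Finset.univ.erase w).filter (fun v => L v = k)
        = {w + (k : ZMod n), w - (k : ZMod n)} := by
    intro k hk1 hk2
    have hkn : k < n := by omega
    have hkval : ((k : ZMod n)).val = k := ZMod.val_cast_of_lt hkn
    have hknz : (k : ZMod n) ≠ 0 := by
      intro h; rw [← hkval, h, ZMod.val_zero] at hk1; omega
    have hnkval : ((-(k : ZMod n))).val = n - k := by
      rw [ZMod.neg_val, if_neg hknz, hkval]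
    ext v
    simp only [Finset.mem_filter, Finset.mem_erase, Finset.mem_univ, true_and,
      Finset.mem_insert, Finset.mem_singleton, and_true, hLdef]
    constructor
    · rintro ⟨hvw, hmin⟩
      have h1 : v - w ≠ 0 := sub_ne_zero.mpr hvw
      have h2 : (v - w).val ≠ 0 := fun h => h1 (ZMod.val_eq_zero _ |>.mp h)
      have h3 : (v - w).val < n := ZMod.val_lt _
      have h4 : (w - v).val = n - (v - w).val := hval_sub v hvw
      have : (v - w).val = k ∨ (v - w).val = n - k := by omega
      rcases this with h | h
      · left
        have : v - w = (k : ZMod n) := ZMod.val_injective n (by rw [h, hkval])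
        have := sub_eq_iff_eq_add.mp this
        rw [this]; ring
      · right
        have : v - w = -(k : ZMod n) := ZMod.val_injective n (by rw [h, hnkval])
        have := sub_eq_iff_eq_add.mp this
        rw [this]; ring
    · rintro (h | h) <;> subst h
      · have hvw : w + (k : ZMod n) - w = (k : ZMod n) := by ring
        have hwv : w - (w + (k : ZMod n)) = -(k : ZMod n) := by ring
        refine ⟨?_, ?_⟩
        · intro h; apply hknz; rw [← hvw]; rw [h]; ring
        · rw [hvw, hwv, hkval, hnkval]; omega
      · have hvw : w - (k : ZMod n) - w = -(k : ZMod n) := by ring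
        have hwv : w - (w - (k : ZMod n)) = (k : ZMod n) := by ring
        refine ⟨?_, ?_⟩
        · intro h; apply hknz
          have : w - (k : ZMod n) - w = 0 := by rw [h]; ring
          rw [hvw] at this; simpa using this
        · rw [hvw, hwv, hkval, hnkval]; omega
  -- fiber sums
  have hG : ∀ i ∈ Finset.Icc 1 d,
      (∑ v ∈ (Finset.univ.erase w).filter (fun v => L v = φ i), x s(w, v))
        = 2 * base i := by
    intro i hi
    rw [Finset.mem_Icc] at hi
    have hk : φ i ∈ Set.Icc 1 d := hφ.mapsTo (by simpa using hi)
    obtain ⟨hk1, hk2⟩ := hk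
    have hkn : φ i < n := by omega
    have hkval : ((φ i : ZMod n)).val = φ i := ZMod.val_cast_of_lt hkn
    have hconst : ∀ v ∈ (Finset.univ.erase w).filter (fun v => L v = φ i),
        x s(w, v) = base i * (if 2 * φ i = n then 2 else 1) := by
      intro v hv
      rw [Finset.mem_filter, Finset.mem_erase] at hv
      exact hx w v (Ne.symm hv.1.1) i hi.1 hi.2 hv.2.symm
    rw [Finset.sum_congr rfl hconst, Finset.sum_const, hfiber (φ i) hk1 hk2]
    by_cases h2k : 2 * φ i = n
    · have hz : ((φ i : ZMod n)) + (φ i : ZMod n) = 0 := by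
        have : ((2 * φ i : ℕ) : ZMod n) = 0 := by rw [h2k]; exact ZMod.natCast_self n
        push_cast at this; linear_combination this
      have heq : w + (φ i : ZMod n) = w - (φ i : ZMod n) := by
        rw [sub_eq_add_neg]; congr 1
        rw [eq_neg_iff_add_eq_zero]; exact hz
      rw [heq]
      simp only [Finset.insert_eq_self.mpr (Finset.mem_singleton_self _),
        Finset.card_singleton, one_smul, if_pos h2k]
      ring
    · have hne : w + (φ i : ZMod n) ≠ w - (φ i : ZMod n) := by
        intro h
        have hz : ((2 * φ i : ℕ) : ZMod n) = 0 := by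
          push_cast
          have : (φ i : ZMod n) + (φ i : ZMod n) = 0 := by
            have := sub_eq_zero.mpr h
            linear_combination this
          linear_combination this
        rw [ZMod.natCast_eq_zero_iff] at hz
        have := Nat.le_of_dvd (by omega) hz
        omega
      rw [Finset.card_pair hne, if_neg h2k]
      ring
  -- reindex sum over lengths by φ
  have hre : (∑ k ∈ Finset.Icc 1 d,
        ∑ v ∈ (Finset.univ.erase w).filter (fun v => L v = k), x s(w, v))
      = ∑ i ∈ Finset.Icc 1 d, 2 * base i := by
    refine (Finset.sum_bij (fun i _ => φ i) ?_ ?_ ?_ ?_).symm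
    · intro a ha
      have := hφ.mapsTo (by simpa using Finset.mem_Icc.mp ha)
      simpa [Finset.mem_Icc] using this
    · intro a ha b hb hab
      exact hφ.injOn (by simpa using Finset.mem_Icc.mp ha)
        (by simpa using Finset.mem_Icc.mp hb) hab
    · intro b hb
      obtain ⟨a, ha, hab⟩ := hφ.surjOn (by simpa using Finset.mem_Icc.mp hb)
      exact ⟨a, by simpa [Finset.mem_Icc] using ha, hab⟩
    · intro a ha
      exact (hG a ha).symm
  rw [hre]
  -- ℓ is positive and at most d
  have hℓge1 : 1 ≤ ℓ := by
    rcases Nat.eq_zero_or_pos ℓ with h | h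
    · rw [h, hg0] at hℓ1; omega
    · exact h
  have hd1 : 1 ≤ d := by rw [hd]; omega
  have hℓd : ℓ ≤ d := by
    obtain ⟨i, hi, hφi⟩ := hφ.surjOn (Set.mem_Icc.mpr ⟨le_refl 1, hd1⟩)
    have hgi : g i = 1 := by rw [hg i hi.1, hφi, Nat.gcd_one_right]
    have : ¬ i < ℓ := fun h => hℓmin i h hgi
    have := hi.2
    omega
  -- the base weights sum to 1
  have hsum : ∑ i ∈ Finset.Icc 1 ℓ, base i = 1 := by
    have hstep : ∀ i ∈ Finset.Icc 1 ℓ,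
        base i = ((g (i - 1) : ℝ) - g i) / n + (if i = ℓ then (1:ℝ) / n else 0) := by
      intro i hi
      rw [Finset.mem_Icc] at hi
      simp only [hbase]
      rcases lt_or_eq_of_le hi.2 with h | h
      · rw [if_pos h, if_neg (by omega)]; ring
      · rw [if_neg (by omega), if_pos h, if_pos h, h, hℓ1]
        push_cast
        ring
    rw [Finset.sum_congr rfl hstep, Finset.sum_add_distrib]
    have h2 : (∑ i ∈ Finset.Icc 1 ℓ, if i = ℓ then (1 : ℝ) / n else 0) = 1 / n := by
      rw [Finset.sum_ite_eq' (Finset.Icc 1 ℓ) ℓ (fun _ => (1 : ℝ) / n)]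
      rw [if_pos (Finset.mem_Icc.mpr ⟨hℓge1, le_refl ℓ⟩)]
    have h1 : (∑ i ∈ Finset.Icc 1 ℓ, ((g (i - 1) : ℝ) - g i) / n) = ((n : ℝ) - 1) / n := by
      rw [show Finset.Icc 1 ℓ = Finset.Ico 1 (ℓ + 1) from (Finset.Ico_add_one_right_eq_Icc 1 ℓ).symm]
      rw [Finset.sum_Ico_eq_sum_range]
      simp only [Nat.add_sub_cancel]
      have hc : ∀ j ∈ Finset.range ℓ, ((g (1 + j - 1) : ℝ) - g (1 + j)) / n
          = (fun m => (g m : ℝ) / n) j - (fun m => (g m : ℝ) / n) (j + 1) := by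
        intro j _
        simp only
        rw [show 1 + j - 1 = j by omega, show 1 + j = j + 1 by omega]
        ring
      rw [Finset.sum_congr rfl hc, Finset.sum_range_sub' (fun m => (g m : ℝ) / n) ℓ]
      simp only [hg0, hℓ1]
      push_cast
      ring
    rw [h1, h2]
    field_simp
    ring
  have hzero : ∀ i ∈ Finset.Icc 1 d, i ∉ Finset.Icc 1 ℓ → 2 * base i = 0 := by
    intro i hi hni
    rw [Finset.mem_Icc] at hi
    rw [Finset.mem_Icc] at hni
    simp only [hbase]
    rw [if_neg (by omega), if_neg (by omega)]
    ring
  rw [← Finset.sum_subset (Finset.Icc_subset_Icc_right hℓd) hzero, ← Finset.mul_sum, hsum]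
  norm_num
end

section
/- With the edge weights x of the previous context, for every 0 ≤ i ≤ ℓ−1 and every connected component S of the circulant graph C⟨{φ(1),...,φ(i)}⟩, one has x(E(S)) = |S| − 1 and hence x(δ(S)) = 2. -/
open Finset SimpleGraph


lemma circ_reach {G : Type*} [AddCommGroup G] (s : Set G) (u v : G) :
    (circulantGraph s).Reachable u v ↔ v - u ∈ AddSubgroup.closure s := by
  constructor
  · rintro ⟨w⟩
    induction w with
    | nil => simpa using (AddSubgroup.closure s).zero_mem
    | @cons a b c h p ih =>
      have hab : b - a ∈ AddSubgroup.closure s := by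
        rw [circulantGraph, fromRel_adj] at h
        rcases h.2 with h' | h'
        · simpa using AddSubgroup.neg_mem _ (AddSubgroup.subset_closure h')
        · exact AddSubgroup.subset_closure h'
      have := AddSubgroup.add_mem _ ih hab
      simpa using this
  · intro h
    let R : AddSubgroup G :=
      { carrier := {z | ∀ u : G, (circulantGraph s).Reachable u (u + z)}
        zero_mem' := by intro u; rw [add_zero]
        add_mem' := by
          intro z1 z2 h1 h2 u
          exact (h1 u).trans (by simpa [add_assoc] using h2 (u + z1))
        neg_mem' := by
          intro z hz u
          have := hz (u + -z)
          simpa using this.symm }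
    have hsR : s ⊆ R := by
      intro z hz u
      by_cases h0 : z = 0
      · subst h0; rw [add_zero]
      · refine Adj.reachable ?_
        rw [circulantGraph, fromRel_adj]
        exact ⟨fun hc => h0 (left_eq_add.mp hc), Or.inr (by simp [hz])⟩
    have : v - u ∈ R := (AddSubgroup.closure_le R).2 hsR h
    simpa using this u

lemma dvd_val_iff {n d : ℕ} [NeZero n] (hd : d ∣ n) (z : ZMod n) :
    (d : ZMod n) ∣ z ↔ d ∣ z.val := by
  constructor
  · rintro ⟨c, rfl⟩
    have : ((d : ZMod n) * c) = ((d * c.val : ℕ) : ZMod n) := by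
      push_cast [ZMod.natCast_val, ZMod.cast_id]; ring
    rw [this, ZMod.val_natCast]
    exact (Nat.dvd_mod_iff hd).mpr ⟨c.val, rfl⟩
  · rintro ⟨k, hk⟩
    refine ⟨(k : ZMod n), ?_⟩
    have hz : z = ((z.val : ℕ) : ZMod n) := by simp [ZMod.natCast_val, ZMod.cast_id]
    rw [hz, hk]; push_cast; ring

lemma card_T {n d : ℕ} [NeZero n] (hd : d ∣ n) (hd0 : 0 < d) :
    (Finset.univ.filter (fun z : ZMod n => d ∣ z.val)).card = n / d := by
  rw [← Finset.card_range (n / d)]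
  apply Finset.card_bij' (fun z _ => z.val / d) (fun k _ => ((d * k : ℕ) : ZMod n))
  · intro z hz
    simp only [Finset.mem_filter, Finset.mem_univ, true_and] at hz
    rw [Finset.mem_range]
    exact Nat.div_lt_div_of_lt_of_dvd hd (ZMod.val_lt z)
  · intro k hk
    rw [Finset.mem_range] at hk
    have hlt : d * k < n := by
      rcases hd with ⟨m, rfl⟩
      have : k < m := by rwa [Nat.mul_div_cancel_left _ hd0] at hk
      exact (Nat.mul_lt_mul_left hd0).mpr this
    simp only [Finset.mem_filter, Finset.mem_univ, true_and]
    rw [ZMod.val_natCast_of_lt hlt]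
    exact ⟨k, rfl⟩
  · intro z hz
    simp only [Finset.mem_filter, Finset.mem_univ, true_and] at hz
    rw [Nat.mul_div_cancel' hz, ZMod.natCast_val, ZMod.cast_id]
  · intro k hk
    rw [Finset.mem_range] at hk
    have hlt : d * k < n := by
      rcases hd with ⟨m, rfl⟩
      have : k < m := by rwa [Nat.mul_div_cancel_left _ hd0] at hk
      exact (Nat.mul_lt_mul_left hd0).mpr this
    rw [ZMod.val_natCast_of_lt hlt, Nat.mul_div_cancel_left _ hd0]

lemma closure_eq_dvd {n : ℕ} [NeZero n] (s : Set (ZMod n)) (d : ℕ)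
    (hds : ∀ z ∈ s, (d : ZMod n) ∣ z) (hdc : (d : ZMod n) ∈ AddSubgroup.closure s)
    (z : ZMod n) : z ∈ AddSubgroup.closure s ↔ (d : ZMod n) ∣ z := by
  constructor
  · intro hz
    let Dv : AddSubgroup (ZMod n) :=
      { carrier := {w | (d : ZMod n) ∣ w}
        zero_mem' := dvd_zero _
        add_mem' := fun h1 h2 => dvd_add h1 h2
        neg_mem' := fun h => dvd_neg.mpr h }
    exact (AddSubgroup.closure_le Dv).2 hds hz
  · rintro ⟨c, rfl⟩
    have hc : c = ((c.val : ℕ) : ZMod n) := by simp [ZMod.natCast_val, ZMod.cast_id]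
    rw [hc, mul_comm, ← nsmul_eq_mul]
    exact AddSubgroup.nsmul_mem _ hdc _

lemma minlen_facts {n : ℕ} [NeZero n] (z : ZMod n) (hz : z ≠ 0) :
    1 ≤ min z.val (n - z.val) ∧ min z.val (n - z.val) ≤ n / 2 ∧
      (-z).val = n - z.val := by
  have hv : z.val ≠ 0 := fun h => hz (by rwa [ZMod.val_eq_zero] at h)
  have hvn : z.val < n := ZMod.val_lt z
  refine ⟨le_min (Nat.one_le_iff_ne_zero.mpr hv) (by omega), ?_, ?_⟩
  · rw [Nat.le_div_iff_mul_le two_pos]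
    have h1 : min z.val (n - z.val) ≤ z.val := min_le_left _ _
    have h2 : min z.val (n - z.val) ≤ n - z.val := min_le_right _ _
    omega
  · haveI : NeZero z := ⟨hz⟩
    exact ZMod.val_neg_of_ne_zero z

lemma sumz {n : ℕ} [NeZero n] (hn : 3 ≤ n) (f : ZMod n → ℝ) (W : ℕ → ℝ)
    (hf : ∀ z : ZMod n, z ≠ 0 →
      f z = W (min z.val (n - z.val)) * (if 2 * min z.val (n - z.val) = n then 2 else 1))
    (Q : ℕ → Prop) [DecidablePred Q] :
    ∑ z ∈ univ.filter (fun z : ZMod n => z ≠ 0 ∧ Q (min z.val (n - z.val))), f z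
      = ∑ m ∈ (Icc 1 (n / 2)).filter Q, 2 * W m := by
  rw [← Finset.sum_fiberwise_of_maps_to
    (g := fun z : ZMod n => min z.val (n - z.val))
    (t := (Icc 1 (n / 2)).filter Q) ?hmap]
  case hmap =>
    intro z hz
    simp only [mem_filter, mem_univ, true_and] at hz ⊢
    obtain ⟨h1, h2, _⟩ := minlen_facts z hz.1
    exact ⟨mem_Icc.mpr ⟨h1, h2⟩, hz.2⟩
  refine Finset.sum_congr rfl (fun m hm => ?_)
  simp only [mem_filter, mem_Icc] at hm
  obtain ⟨⟨hm1, hm2⟩, hQ⟩ := hm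
  have hmn : m < n := lt_of_le_of_lt hm2 (Nat.div_lt_self (by omega) one_lt_two)
  have hmle : m ≤ n - m := by
    have := (Nat.le_div_iff_mul_le two_pos).mp hm2; omega
  have hval1 : ((m : ℕ) : ZMod n).val = m := ZMod.val_natCast_of_lt hmn
  have hval2 : (((n - m : ℕ)) : ZMod n).val = n - m :=
    ZMod.val_natCast_of_lt (by omega)
  have hfib : (univ.filter (fun z : ZMod n => z ≠ 0 ∧ Q (min z.val (n - z.val)))).filter
      (fun z => min z.val (n - z.val) = m) = {(m : ZMod n), ((n - m : ℕ) : ZMod n)} := by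
    ext z
    simp only [mem_filter, mem_univ, true_and, mem_insert, mem_singleton, and_assoc]
    constructor
    · rintro ⟨hz0, _, hmin⟩
      have hvn : z.val < n := ZMod.val_lt z
      have : z.val = m ∨ z.val = n - m := by
        rcases min_cases z.val (n - z.val) with ⟨he, _⟩ | ⟨he, _⟩ <;> omega
      rcases this with h | h
      · left; rw [← h, ZMod.natCast_val, ZMod.cast_id]
      · right; rw [← h, ZMod.natCast_val, ZMod.cast_id]
    · rintro (rfl | rfl)
      · refine ⟨?_, ?_, ?_⟩
        · intro h; rw [← ZMod.val_eq_zero, hval1] at h; omega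
        · rw [hval1, min_eq_left hmle]; exact hQ
        · rw [hval1]; exact min_eq_left hmle
      · refine ⟨?_, ?_, ?_⟩
        · intro h; rw [← ZMod.val_eq_zero, hval2] at h; omega
        · rw [hval2, Nat.sub_sub_self (le_of_lt hmn), min_comm, min_eq_left hmle]; exact hQ
        · rw [hval2, Nat.sub_sub_self (le_of_lt hmn), min_comm]; exact min_eq_left hmle
  rw [hfib]
  by_cases h2m : 2 * m = n
  · have heq : ((m : ℕ) : ZMod n) = ((n - m : ℕ) : ZMod n) := by
      have : n - m = m := by omega
      rw [this]
    rw [heq, Finset.insert_eq_self.mpr (mem_singleton_self _), Finset.sum_singleton]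
    have hz0 : ((n - m : ℕ) : ZMod n) ≠ 0 := by
      intro h; rw [← ZMod.val_eq_zero, hval2] at h; omega
    rw [hf _ hz0, hval2, Nat.sub_sub_self (le_of_lt hmn), min_comm, min_eq_left hmle,
      if_pos h2m]
    ring
  · have hne : ((m : ℕ) : ZMod n) ≠ ((n - m : ℕ) : ZMod n) := by
      intro h
      have := congrArg ZMod.val h
      rw [hval1, hval2] at this; omega
    rw [Finset.sum_pair hne]
    have hz1 : ((m : ℕ) : ZMod n) ≠ 0 := by
      intro h; rw [← ZMod.val_eq_zero, hval1] at h; omega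
    have hz2 : ((n - m : ℕ) : ZMod n) ≠ 0 := by
      intro h; rw [← ZMod.val_eq_zero, hval2] at h; omega
    rw [hf _ hz1, hf _ hz2, hval1, hval2, Nat.sub_sub_self (le_of_lt hmn), min_comm (n-m),
      min_eq_left hmle, if_neg h2m]
    ring

lemma pair_sum_E {V : Type*} [Fintype V] [DecidableEq V] (S : Set V)
    [DecidablePred (· ∈ S)] (x : Sym2 V → ℝ) :
    ∑ u ∈ univ.filter (· ∈ S), ∑ v ∈ (univ.filter (· ∈ S)).erase u, x s(u, v)
      = 2 * ∑ e ∈ univ.filter (fun e : Sym2 V => ¬ e.IsDiag ∧ ∀ v ∈ e, v ∈ S), x e := by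
  refine Eq.trans ((Finset.sum_sigma (univ.filter (· ∈ S))
    (fun u => (univ.filter (· ∈ S)).erase u)
    (fun p : (_ : V) × V => x s(p.1, p.2))).symm) ?_
  rw [← Finset.sum_fiberwise_of_maps_to (g := fun p : (_ : V) × V => s(p.1, p.2))
    (t := univ.filter (fun e : Sym2 V => ¬ e.IsDiag ∧ ∀ v ∈ e, v ∈ S)) ?hmap]
  case hmap =>
    rintro ⟨a, b⟩ hp
    simp only [Finset.mem_sigma, mem_filter, mem_univ, true_and, Finset.mem_erase] at hp ⊢
    obtain ⟨ha, hb, hbS⟩ := hp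
    refine ⟨by simpa using fun h => hb h.symm, ?_⟩
    intro v hv
    rcases Sym2.mem_iff.mp hv with rfl | rfl
    · exact ha
    · exact hbS
  rw [Finset.mul_sum]
  refine Finset.sum_congr rfl (fun e he => ?_)
  induction e with
  | _ a b =>
    simp only [mem_filter, mem_univ, true_and] at he
    obtain ⟨hd, hmem⟩ := he
    have hab : a ≠ b := by simpa using hd
    have ha : a ∈ S := hmem a (Sym2.mem_mk_left a b)
    have hb : b ∈ S := hmem b (Sym2.mem_mk_right a b)
    have hfib : ((univ.filter (· ∈ S)).sigma (fun u => (univ.filter (· ∈ S)).erase u)).filter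
        (fun p : (_ : V) × V => s(p.1, p.2) = s(a, b))
        = {⟨a, b⟩, ⟨b, a⟩} := by
      ext ⟨c, d⟩
      simp only [mem_filter, Finset.mem_sigma, mem_univ, true_and, Finset.mem_erase,
        mem_insert, mem_singleton, Sigma.mk.inj_iff, heq_eq_eq]
      constructor
      · rintro ⟨⟨hc, hdc, hd'⟩, h⟩
        rcases Sym2.eq_iff.mp h with ⟨rfl, rfl⟩ | ⟨rfl, rfl⟩
        · left; exact ⟨rfl, rfl⟩
        · right; exact ⟨rfl, rfl⟩
      · rintro (⟨rfl, rfl⟩ | ⟨rfl, rfl⟩)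
        · exact ⟨⟨ha, hab.symm, hb⟩, rfl⟩
        · exact ⟨⟨hb, hab, ha⟩, Sym2.eq_swap⟩
    rw [hfib]
    have hne : (⟨a, b⟩ : (_ : V) × V) ≠ ⟨b, a⟩ := by
      intro h
      exact hab (congrArg Sigma.fst h)
    rw [Finset.sum_pair hne]
    show x s(a, b) + x s(b, a) = 2 * x s(a, b)
    rw [show s(b, a) = s(a, b) from Sym2.eq_swap]
    ring

lemma pair_sum_D {V : Type*} [Fintype V] [DecidableEq V] (S : Set V)
    [DecidablePred (· ∈ S)] (x : Sym2 V → ℝ) :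
    ∑ p ∈ ((univ.filter (· ∈ S)) ×ˢ (univ.filter (· ∉ S))), x s(p.1, p.2)
      = ∑ e ∈ univ.filter
          (fun e : Sym2 V => ∃ a b : V, e = s(a, b) ∧ a ∈ S ∧ b ∉ S), x e := by
  rw [← Finset.sum_fiberwise_of_maps_to (g := fun p : V × V => s(p.1, p.2))
    (t := univ.filter (fun e : Sym2 V => ∃ a b : V, e = s(a, b) ∧ a ∈ S ∧ b ∉ S)) ?hmap]
  case hmap =>
    rintro ⟨a, b⟩ hp
    simp only [mem_product, mem_filter, mem_univ, true_and] at hp ⊢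
    exact ⟨a, b, rfl, hp.1, hp.2⟩
  refine Finset.sum_congr rfl (fun e he => ?_)
  simp only [mem_filter, mem_univ, true_and] at he
  obtain ⟨a, b, rfl, ha, hb⟩ := he
  have hfib : (((univ.filter (· ∈ S)) ×ˢ (univ.filter (· ∉ S)))).filter
      (fun p : V × V => s(p.1, p.2) = s(a, b)) = {(a, b)} := by
    ext ⟨c, d⟩
    simp only [mem_filter, mem_product, mem_univ, true_and, mem_singleton, Prod.mk.injEq]
    constructor
    · rintro ⟨⟨hc, hd'⟩, h⟩
      rcases Sym2.eq_iff.mp h with ⟨rfl, rfl⟩ | ⟨rfl, rfl⟩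
      · exact ⟨rfl, rfl⟩
      · exact absurd hc hb
    · rintro ⟨rfl, rfl⟩
      exact ⟨⟨ha, hb⟩, rfl⟩
  rw [hfib, Finset.sum_singleton]

lemma tele (G : ℕ → ℝ) (k : ℕ) : ∑ j ∈ Finset.Icc 1 k, (G (j - 1) - G j) = G 0 - G k := by
  induction k with
  | zero => simp
  | succ k ih =>
    rw [Finset.sum_Icc_succ_top (by omega), ih]
    simp only [Nat.add_sub_cancel]
    ring

open scoped Classical in
/-- With the explicit subtour-LP solution `x` (strictly decreasing `g`-sequence), every
connected component `S` of the circulant graph `C⟨{φ(1),...,φ(i)}⟩`, `0 ≤ i ≤ ℓ−1`,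
satisfies `x(E(S)) = |S| − 1` and `x(δ(S)) = 2`. -/
theorem stmt_11 (n : ℕ) (hn : 3 ≤ n) [NeZero n] (φ : ℕ → ℕ)
    (hφ : Set.BijOn φ (Set.Icc 1 (n / 2)) (Set.Icc 1 (n / 2)))
    (g : ℕ → ℕ) (hg0 : g 0 = n)
    (hg : ∀ i, 1 ≤ i → g i = Nat.gcd (g (i - 1)) (φ i))
    (ℓ : ℕ) (hℓ1 : g ℓ = 1) (hℓmin : ∀ i < ℓ, g i ≠ 1)
    (hstrict : ∀ m, 1 ≤ m → m ≤ ℓ → g m < g (m - 1))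
    (x : Sym2 (ZMod n) → ℝ)
    (hx : ∀ u v : ZMod n, u ≠ v → ∀ i, 1 ≤ i → i ≤ n / 2 →
      φ i = min (u - v).val (v - u).val →
      x s(u, v) = (if i < ℓ then ((g (i - 1) : ℝ) - g i) / n
          else if i = ℓ then (g (i - 1) : ℝ) / n else 0) *
        (if 2 * φ i = n then 2 else 1))
    (i : ℕ) (hi : i < ℓ) (u₀ : ZMod n) (S : Set (ZMod n))
    (hS : S = {v : ZMod n | (SimpleGraph.circulantGraph
        {z : ZMod n | ∃ j, 1 ≤ j ∧ j ≤ i ∧ z = (φ j : ZMod n)}).Reachable u₀ v}) :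
    (∑ e ∈ Finset.univ.filter
        (fun e : Sym2 (ZMod n) => ¬ e.IsDiag ∧ ∀ v ∈ e, v ∈ S), x e)
      = (S.ncard : ℝ) - 1 ∧
    (∑ e ∈ Finset.univ.filter
        (fun e : Sym2 (ZMod n) => ∃ a b : ZMod n, e = s(a, b) ∧ a ∈ S ∧ b ∉ S), x e)
      = 2 := by
  set d := g i with hd
  -- basic divisibility facts
  have hgsucc : ∀ k : ℕ, g (k + 1) ∣ g k := fun k => by
    rw [hg (k + 1) (by omega)]; simpa using Nat.gcd_dvd_left _ _
  have hmono : ∀ a b : ℕ, a ≤ b → g b ∣ g a := by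
    intro a b hab
    induction b, hab using Nat.le_induction with
    | base => exact dvd_rfl
    | succ b hb ih => exact dvd_trans (hgsucc b) ih
  have hdn : d ∣ n := hg0 ▸ hmono 0 i (Nat.zero_le i)
  have hgpos : ∀ k, 0 < g k := fun k =>
    Nat.pos_of_dvd_of_pos (hg0 ▸ hmono 0 k (Nat.zero_le k)) (by omega)
  have hd1 : 1 < d := by
    have := hℓmin i hi
    have := hgpos i
    omega
  have hℓpos : 1 ≤ ℓ := by omega
  have hgφ : ∀ j, 1 ≤ j → g j ∣ φ j := fun j hj => by
    rw [hg j hj]; exact Nat.gcd_dvd_right _ _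
  have hdφ : ∀ j, 1 ≤ j → j ≤ i → d ∣ φ j := fun j hj1 hj2 =>
    dvd_trans (hmono j i hj2) (hgφ j hj1)
  have hnotdφ : ∀ j, i < j → j ≤ ℓ → ¬ d ∣ φ j := by
    intro j hj1 hj2 hdvd
    have h1 : g (j - 1) ∣ φ j := dvd_trans (hmono i (j - 1) (by omega)) hdvd
    have h2 : g j = g (j - 1) := by
      rw [hg j (by omega)]; exact Nat.gcd_eq_left h1
    have := hstrict j (by omega) hj2
    omega
  -- ℓ ≤ n / 2
  have hpow : ∀ k, k ≤ ℓ → 2 ^ k ≤ g (ℓ - k) := by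
    intro k hk
    induction k with
    | zero => simp; exact hgpos ℓ
    | succ k ih =>
      have h1 : 2 ^ k ≤ g (ℓ - k) := ih (by omega)
      have hm : ℓ - k = (ℓ - (k + 1)) + 1 := by omega
      have hdvd : g ((ℓ - (k + 1)) + 1) ∣ g (ℓ - (k + 1)) := hgsucc _
      have hlt : g (ℓ - k) < g (ℓ - (k + 1)) := by
        have := hstrict (ℓ - k) (by omega) (by omega)
        have : g (ℓ - k) < g (ℓ - k - 1) := this
        have he : ℓ - k - 1 = ℓ - (k + 1) := by omega
        rwa [he] at this
      rw [hm] at h1 hlt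
      obtain ⟨t, ht⟩ := hdvd
      have hgp := hgpos ((ℓ - (k + 1)) + 1)
      have ht2 : 2 ≤ t := by nlinarith [hgpos (ℓ - (k+1))]
      calc 2 ^ (k + 1) = 2 ^ k * 2 := by ring
      _ ≤ g ((ℓ - (k + 1)) + 1) * t := Nat.mul_le_mul h1 ht2
      _ = g (ℓ - (k + 1)) := ht.symm
  have h2ℓ : 2 ^ ℓ ≤ n := by
    have := hpow ℓ le_rfl
    simpa [hg0] using this
  have hℓn2 : ℓ ≤ n / 2 := by
    have h2 : ∀ k, 1 ≤ k → 2 * k ≤ 2 ^ k := by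
      intro k hk
      induction k with
      | zero => omega
      | succ k ih =>
        rcases Nat.eq_or_lt_of_le hk with h | h
        · simp [← h]
        · have h1 := ih (by omega)
          have h2 : (2:ℕ) ≤ 2 ^ k := by
            calc (2:ℕ) = 2 * 1 := by ring
            _ ≤ 2 * k := by omega
            _ ≤ 2 ^ k := h1
          rw [pow_succ]
          omega
    have := h2 ℓ hℓpos
    omega
  -- the structure of S
  set s' : Set (ZMod n) := {z : ZMod n | ∃ j, 1 ≤ j ∧ j ≤ i ∧ z = (φ j : ZMod n)} with hs'
  have hs'dvd : ∀ z ∈ s', (d : ZMod n) ∣ z := by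
    rintro z ⟨j, hj1, hj2, rfl⟩
    exact_mod_cast Nat.cast_dvd_cast (α := ZMod n) (hdφ j hj1 hj2)
  have hclos : ∀ j, j ≤ i → (g j : ZMod n) ∈ AddSubgroup.closure s' := by
    intro j hj
    induction j with
    | zero => rw [hg0]; simpa using (AddSubgroup.closure s').zero_mem
    | succ j ih =>
      have hgj : (g j : ZMod n) ∈ AddSubgroup.closure s' := ih (by omega)
      have hφj : ((φ (j + 1) : ℕ) : ZMod n) ∈ AddSubgroup.closure s' :=
        AddSubgroup.subset_closure ⟨j + 1, by omega, by omega, rfl⟩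
      have hbez := Nat.gcd_eq_gcd_ab (g j) (φ (j + 1))
      have hcast := congrArg (fun t : ℤ => (t : ZMod n)) hbez
      push_cast at hcast
      have hgs : g (j + 1) = Nat.gcd (g j) (φ (j + 1)) := by
        have := hg (j + 1) (by omega); simpa using this
      rw [hgs]
      push_cast
      rw [hcast]
      refine AddSubgroup.add_mem _ ?_ ?_
      · rw [mul_comm, ← zsmul_eq_mul]
        exact AddSubgroup.zsmul_mem _ hgj _
      · rw [mul_comm, ← zsmul_eq_mul]
        exact AddSubgroup.zsmul_mem _ hφj _
  have hmemS : ∀ v : ZMod n, v ∈ S ↔ (d : ZMod n) ∣ v - u₀ := by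
    intro v
    rw [hS]
    show (SimpleGraph.circulantGraph s').Reachable u₀ v ↔ _
    rw [circ_reach, closure_eq_dvd s' d hs'dvd (hclos i le_rfl)]
  -- counting
  have hd0 : 0 < d := by omega
  have hcardSf : (Finset.univ.filter (fun v => v ∈ S)).card = n / d := by
    rw [← card_T (n := n) hdn hd0]
    apply Finset.card_nbij' (i := fun v => v - u₀) (j := fun z => z + u₀)
    · intro v hv
      simp only [Finset.mem_coe, Finset.mem_filter, Finset.mem_univ, true_and] at hv ⊢
      exact (dvd_val_iff hdn _).mp ((hmemS v).mp hv)
    · intro z hz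
      simp only [Finset.mem_coe, Finset.mem_filter, Finset.mem_univ, true_and] at hz ⊢
      refine (hmemS _).mpr ?_
      have := (dvd_val_iff hdn z).mpr hz
      simpa using this
    · intro v _; simp
    · intro z _; simp
  have hncard : S.ncard = n / d := by
    rw [← hcardSf, ← Set.ncard_coe_finset]
    congr 1
    ext v
    simp
  -- translation invariance of x
  have key1 : ∀ (u z : ZMod n), z ≠ 0 → x s(u, u + z) = x s(0, z) := by
    intro u z hz
    obtain ⟨h1, h2, hneg⟩ := minlen_facts z hz
    have hmIcc : min (-z).val z.val ∈ Set.Icc 1 (n / 2) := by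
      rw [hneg, min_comm]
      exact Set.mem_Icc.mpr ⟨h1, h2⟩
    obtain ⟨j, hj, hφj⟩ := hφ.surjOn hmIcc
    rw [Set.mem_Icc] at hj
    have e1 : u - (u + z) = -z := by ring
    have e2 : (u + z) - u = z := by ring
    have e3 : (0 : ZMod n) - z = -z := by ring
    have e4 : z - 0 = z := by ring
    rw [hx u (u + z) (fun h => hz (left_eq_add.mp h)) j hj.1 hj.2
        (by rw [e1, e2]; exact hφj),
      hx 0 z (fun h => hz h.symm) j hj.1 hj.2 (by rw [e3, e4]; exact hφj)]
  -- the weight function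
  set w₀ : ℕ → ℝ := fun j => (if j < ℓ then ((g (j - 1) : ℝ) - g j) / n
      else if j = ℓ then (g (j - 1) : ℝ) / n else 0) with hw₀
  set W : ℕ → ℝ := fun m => w₀ (Function.invFunOn φ (Set.Icc 1 (n / 2)) m) with hWdef
  have hfW : ∀ z : ZMod n, z ≠ 0 → x s(0, z)
      = W (min z.val (n - z.val)) * (if 2 * min z.val (n - z.val) = n then 2 else 1) := by
    intro z hz
    obtain ⟨h1, h2, hneg⟩ := minlen_facts z hz
    have hm : min z.val (n - z.val) ∈ Set.Icc 1 (n / 2) := Set.mem_Icc.mpr ⟨h1, h2⟩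
    obtain ⟨j', hj', hφj'⟩ := hφ.surjOn hm
    have hex : ∃ j' ∈ Set.Icc 1 (n / 2), φ j' = min z.val (n - z.val) := ⟨j', hj', hφj'⟩
    have hjmem : Function.invFunOn φ (Set.Icc 1 (n / 2)) (min z.val (n - z.val))
        ∈ Set.Icc 1 (n / 2) := Function.invFunOn_mem hex
    have hjeq : φ (Function.invFunOn φ (Set.Icc 1 (n / 2)) (min z.val (n - z.val)))
        = min z.val (n - z.val) := Function.invFunOn_eq hex
    rw [Set.mem_Icc] at hjmem
    rw [hx 0 z (fun h => hz h.symm) _ hjmem.1 hjmem.2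
        (by rw [zero_sub, sub_zero, hjeq, hneg, min_comm]), hjeq, hWdef, hw₀]
  have hWφ : ∀ j, 1 ≤ j → j ≤ n / 2 → W (φ j) = w₀ j := by
    intro j hj1 hj2
    have hjmem : j ∈ Set.Icc 1 (n / 2) := Set.mem_Icc.mpr ⟨hj1, hj2⟩
    rw [hWdef]
    simp only
    congr 1
    exact hφ.injOn.leftInvOn_invFunOn hjmem
  -- telescoping values
  have hnR : (n : ℝ) ≠ 0 := by positivity
  have hA : ∑ j ∈ Finset.Icc 1 i, 2 * w₀ j = 2 * ((n : ℝ) - d) / n := by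
    have hcg : ∀ j ∈ Finset.Icc 1 i, 2 * w₀ j
        = (2 / n) * (((fun k => (g k : ℝ)) (j - 1)) - ((fun k => (g k : ℝ)) j)) := by
      intro j hj
      rw [Finset.mem_Icc] at hj
      rw [hw₀]
      simp only
      rw [if_pos (by omega)]
      ring
    rw [Finset.sum_congr rfl hcg, ← Finset.mul_sum, tele (fun k => (g k : ℝ)) i]
    simp only [hg0]
    field_simp
    rfl
  have hC : ∑ j ∈ Finset.Icc 1 ℓ, 2 * w₀ j = 2 := by
    have hℓeq : ℓ - 1 + 1 = ℓ := by omega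
    rw [← hℓeq, Finset.sum_Icc_succ_top (by omega)]
    have hcg : ∀ j ∈ Finset.Icc 1 (ℓ - 1), 2 * w₀ j
        = (2 / n) * (((fun k => (g k : ℝ)) (j - 1)) - ((fun k => (g k : ℝ)) j)) := by
      intro j hj
      rw [Finset.mem_Icc] at hj
      rw [hw₀]
      simp only
      rw [if_pos (by omega)]
      ring
    rw [Finset.sum_congr rfl hcg, ← Finset.mul_sum, tele (fun k => (g k : ℝ)) (ℓ - 1)]
    have hwl : w₀ (ℓ - 1 + 1) = (g (ℓ - 1 + 1 - 1) : ℝ) / n := by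
      rw [hw₀]
      simp only
      rw [if_neg (by omega), if_pos (by omega)]
    rw [hwl]
    simp only [hg0, hℓeq, Nat.add_sub_cancel]
    field_simp
    ring
  -- the three z-sums
  have hAval : ∑ z ∈ Finset.univ.filter
      (fun z : ZMod n => z ≠ 0 ∧ d ∣ min z.val (n - z.val)), x s(0, z)
      = 2 * ((n : ℝ) - d) / n := by
    rw [sumz hn _ W hfW (fun m => d ∣ m)]
    have hre : ∑ m ∈ (Finset.Icc 1 (n / 2)).filter (fun m => d ∣ m), 2 * W m
        = ∑ j ∈ (Finset.Icc 1 (n / 2)).filter (fun j => d ∣ φ j), 2 * w₀ j := by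
      symm
      apply Finset.sum_nbij' (i := fun j => φ j)
        (j := fun m => Function.invFunOn φ (Set.Icc 1 (n / 2)) m)
      · intro j hj
        simp only [Finset.mem_filter, Finset.mem_Icc] at hj ⊢
        have := hφ.mapsTo (Set.mem_Icc.mpr hj.1)
        rw [Set.mem_Icc] at this
        exact ⟨this, hj.2⟩
      · intro m hm
        simp only [Finset.mem_filter, Finset.mem_Icc] at hm ⊢
        have hex : ∃ j ∈ Set.Icc 1 (n / 2), φ j = m := hφ.surjOn (Set.mem_Icc.mpr hm.1)
        have h1 := Function.invFunOn_mem hex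
        have h2 := Function.invFunOn_eq hex
        rw [Set.mem_Icc] at h1
        rw [h2]
        exact ⟨h1, hm.2⟩
      · intro j hj
        simp only [Finset.mem_filter, Finset.mem_Icc] at hj
        exact hφ.injOn.leftInvOn_invFunOn (Set.mem_Icc.mpr hj.1)
      · intro m hm
        simp only [Finset.mem_filter, Finset.mem_Icc] at hm
        exact Function.invFunOn_eq (hφ.surjOn (Set.mem_Icc.mpr hm.1))
      · intro j hj
        simp only [Finset.mem_filter, Finset.mem_Icc] at hj
        rw [hWφ j hj.1.1 hj.1.2]
    rw [hre, ← hA]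
    symm
    apply Finset.sum_subset
    · intro j hj
      rw [Finset.mem_Icc] at hj
      simp only [Finset.mem_filter, Finset.mem_Icc]
      exact ⟨⟨hj.1, by omega⟩, hdφ j hj.1 hj.2⟩
    · intro j hj hnotin
      simp only [Finset.mem_filter, Finset.mem_Icc] at hj
      rw [Finset.mem_Icc] at hnotin
      have hji : i < j := by omega
      have hjℓ : ℓ < j := by
        by_contra h
        exact hnotdφ j hji (by omega) hj.2
      rw [hw₀]
      simp only
      rw [if_neg (by omega), if_neg (by omega)]
      ring
  have hCval : ∑ z ∈ Finset.univ.filter (fun z : ZMod n => z ≠ 0), x s(0, z) = 2 := by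
    have hfe : Finset.univ.filter (fun z : ZMod n => z ≠ 0)
        = Finset.univ.filter
          (fun z : ZMod n => z ≠ 0 ∧ (fun _ : ℕ => True) (min z.val (n - z.val))) := by
      ext z; simp
    rw [hfe, sumz hn _ W hfW (fun _ => True)]
    have hre : ∑ m ∈ (Finset.Icc 1 (n / 2)).filter (fun _ => True), 2 * W m
        = ∑ j ∈ (Finset.Icc 1 (n / 2)).filter (fun _ : ℕ => True), 2 * w₀ j := by
      symm
      apply Finset.sum_nbij' (i := fun j => φ j)
        (j := fun m => Function.invFunOn φ (Set.Icc 1 (n / 2)) m)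
      · intro j hj
        simp only [Finset.mem_filter, Finset.mem_Icc, and_true] at hj ⊢
        have := hφ.mapsTo (Set.mem_Icc.mpr hj)
        rwa [Set.mem_Icc] at this
      · intro m hm
        simp only [Finset.mem_filter, Finset.mem_Icc, and_true] at hm ⊢
        have hex : ∃ j ∈ Set.Icc 1 (n / 2), φ j = m := hφ.surjOn (Set.mem_Icc.mpr hm)
        have h1 := Function.invFunOn_mem hex
        rwa [Set.mem_Icc] at h1
      · intro j hj
        simp only [Finset.mem_filter, Finset.mem_Icc, and_true] at hj
        exact hφ.injOn.leftInvOn_invFunOn (Set.mem_Icc.mpr hj)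
      · intro m hm
        simp only [Finset.mem_filter, Finset.mem_Icc, and_true] at hm
        exact Function.invFunOn_eq (hφ.surjOn (Set.mem_Icc.mpr hm))
      · intro j hj
        simp only [Finset.mem_filter, Finset.mem_Icc, and_true] at hj
        rw [hWφ j hj.1 hj.2]
    have hsub : ∑ j ∈ Finset.Icc 1 ℓ, 2 * w₀ j = ∑ j ∈ Finset.Icc 1 (n / 2), 2 * w₀ j := by
      apply Finset.sum_subset
      · intro j hj
        rw [Finset.mem_Icc] at hj
        rw [Finset.mem_Icc]
        exact ⟨hj.1, by omega⟩
      · intro j hj hnotin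
        rw [Finset.mem_Icc] at hj hnotin
        rw [hw₀]
        simp only
        rw [if_neg (by omega), if_neg (by omega)]
        ring
    rw [hre, Finset.filter_true, ← hsub]
    exact hC
  have hBval : ∑ z ∈ Finset.univ.filter
      (fun z : ZMod n => z ≠ 0 ∧ ¬ d ∣ min z.val (n - z.val)), x s(0, z)
      = 2 * (d : ℝ) / n := by
    have hsplit := Finset.sum_filter_add_sum_filter_not
      (Finset.univ.filter (fun z : ZMod n => z ≠ 0))
      (fun z : ZMod n => d ∣ min z.val (n - z.val)) (fun z => x s(0, z))
    rw [Finset.filter_filter, Finset.filter_filter] at hsplit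
    rw [hCval] at hsplit
    have he1 : Finset.univ.filter (fun z : ZMod n => z ≠ 0 ∧ d ∣ min z.val (n - z.val))
        = Finset.univ.filter (fun a : ZMod n => a ≠ 0 ∧ d ∣ min a.val (n - a.val)) := rfl
    have hd2 : (2 : ℝ) * ((n : ℝ) - d) / n + 2 * d / n = 2 := by field_simp; ring
    rw [← hAval] at hd2
    linarith [hsplit, hd2]
  -- divisibility transfer helpers
  have hdvd_min : ∀ z : ZMod n, ((d : ZMod n) ∣ z ↔ d ∣ min z.val (n - z.val)) := by
    intro z
    rw [dvd_val_iff hdn]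
    constructor
    · intro h
      rcases min_choice z.val (n - z.val) with he | he <;> rw [he]
      · exact h
      · exact Nat.dvd_sub hdn h
    · intro h
      rcases min_choice z.val (n - z.val) with he | he
      · rwa [he] at h
      · rw [he] at h
        have := Nat.dvd_sub hdn h
        rwa [Nat.sub_sub_self (le_of_lt (ZMod.val_lt z))] at this
  -- inner sums
  have hinnerE : ∀ u ∈ (Finset.univ.filter (fun v => v ∈ S)),
      (∑ v ∈ (Finset.univ.filter (fun v => v ∈ S)).erase u, x s(u, v))
      = ∑ z ∈ Finset.univ.filter
        (fun z : ZMod n => z ≠ 0 ∧ d ∣ min z.val (n - z.val)), x s(0, z) := by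
    intro u hu
    have hu' : (d : ZMod n) ∣ u - u₀ := (hmemS u).mp (by
      rw [Finset.mem_filter] at hu; exact hu.2)
    apply Finset.sum_nbij' (i := fun v => v - u) (j := fun z => u + z)
    · intro v hv
      rw [Finset.mem_erase] at hv
      simp only [Finset.mem_filter, Finset.mem_univ, true_and] at hv ⊢
      obtain ⟨hne, hvS⟩ := hv
      have hv' : (d : ZMod n) ∣ v - u₀ := (hmemS v).mp hvS
      have hz : (d : ZMod n) ∣ v - u := by
        have : v - u = (v - u₀) - (u - u₀) := by ring
        rw [this]
        exact dvd_sub hv' hu'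
      exact ⟨sub_ne_zero_of_ne hne, (hdvd_min _).mp hz⟩
    · intro z hz
      simp only [Finset.mem_filter, Finset.mem_univ, true_and] at hz ⊢
      obtain ⟨hz0, hzd⟩ := hz
      have hz' : (d : ZMod n) ∣ z := (hdvd_min _).mpr hzd
      rw [Finset.mem_erase]
      constructor
      · intro h
        exact hz0 (left_eq_add.mp h.symm)
      · simp only [Finset.mem_filter, Finset.mem_univ, true_and]
        refine (hmemS _).mpr ?_
        have : u + z - u₀ = z + (u - u₀) := by ring
        rw [this]
        exact dvd_add hz' hu'
    · intro v _; simp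
    · intro z _; simp
    · intro v hv
      rw [Finset.mem_erase] at hv
      have hz0 : v - u ≠ 0 := sub_ne_zero_of_ne hv.1
      have := key1 u (v - u) hz0
      rw [add_sub_cancel] at this
      exact this
  have hinnerB : ∀ u ∈ (Finset.univ.filter (fun v => v ∈ S)), (∑ v ∈ Finset.univ.filter (fun v : ZMod n => v ∉ S),
        x s(u, v))
      = ∑ z ∈ Finset.univ.filter
        (fun z : ZMod n => z ≠ 0 ∧ ¬ d ∣ min z.val (n - z.val)), x s(0, z) := by
    intro u hu
    have hu' : (d : ZMod n) ∣ u - u₀ := (hmemS u).mp (by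
      rw [Finset.mem_filter] at hu; exact hu.2)
    apply Finset.sum_nbij' (i := fun v => v - u) (j := fun z => u + z)
    · intro v hv
      simp only [Finset.mem_filter, Finset.mem_univ, true_and] at hv ⊢
      have hv' : ¬ (d : ZMod n) ∣ v - u₀ := fun h => hv ((hmemS v).mpr h)
      have hz : ¬ (d : ZMod n) ∣ v - u := by
        intro h
        apply hv'
        have : v - u₀ = (v - u) + (u - u₀) := by ring
        rw [this]
        exact dvd_add h hu'
      refine ⟨fun h0 => hz (h0 ▸ dvd_zero _), fun h => hz ((hdvd_min _).mpr h)⟩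
    · intro z hz
      simp only [Finset.mem_filter, Finset.mem_univ, true_and] at hz ⊢
      obtain ⟨hz0, hzd⟩ := hz
      have hz' : ¬ (d : ZMod n) ∣ z := fun h => hzd ((hdvd_min _).mp h)
      intro hvS
      apply hz'
      have h1 : (d : ZMod n) ∣ u + z - u₀ := (hmemS _).mp hvS
      have : z = (u + z - u₀) - (u - u₀) := by ring
      rw [this]
      exact dvd_sub h1 hu'
    · intro v _; simp
    · intro z _; simp
    · intro v hv
      simp only [Finset.mem_filter, Finset.mem_univ, true_and] at hv
      have hz0 : v - u ≠ 0 := by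
        intro h
        rw [sub_eq_zero] at h
        subst h
        exact hv (by
          rw [Finset.mem_filter] at hu
          exact hu.2)
      have := key1 u (v - u) hz0
      rw [add_sub_cancel] at this
      exact this
  -- conclusion
  have hNd : ((n / d : ℕ) : ℝ) = (n : ℝ) / d := by
    rw [Nat.cast_div hdn (by exact_mod_cast (by omega : d ≠ 0))]
  have hdR : (d : ℝ) ≠ 0 := by exact_mod_cast (by omega : d ≠ 0)
  constructor
  · have hp := pair_sum_E S x
    rw [Finset.sum_congr rfl (fun u hu => (hinnerE u hu).trans hAval),
      Finset.sum_const, hcardSf, nsmul_eq_mul, hNd] at hp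
    rw [hncard, hNd]
    have h2 : (0:ℝ) < n := by positivity
    have h3 : (0:ℝ) < d := by positivity
    field_simp at hp ⊢
    nlinarith [hp]
  · have hp := pair_sum_D S x
    rw [Finset.sum_product] at hp
    rw [Finset.sum_congr rfl (fun u hu => (hinnerB u hu).trans hBval),
      Finset.sum_const, hcardSf, nsmul_eq_mul, hNd] at hp
    rw [← hp]
    have h2 : (0:ℝ) < n := by positivity
    have h3 : (0:ℝ) < d := by positivity
    field_simp
end

section
/- Let n = 4s with s > 1 integer. Define edge weights x on K_n (vertices Z_n) by x_e = 1/2 for every edge of length 1 and x_e = 1 for every edge of length n/2, and x_e = 0 otherwise. Define crown coefficients α(e) = 4s − 6 + j for an edge of length j < n/2 and α(e) = 2(s−1) for an edge of length n/2. Then Σ_e α(e)·x_e = 12s² − 14s, which is strictly less than the crown inequality right-hand side 12s(s−1) − 2 = 12s² − 12s − 2. -/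
open Finset

lemma double_sum_helper {V : Type*} [Fintype V] [DecidableEq V] (f : Sym2 V → ℝ)
    (hdiag : ∀ v, f s(v, v) = 0) :
    ∑ p : V × V, f (Function.uncurry Sym2.mk p) = 2 * ∑ e : Sym2 V, f e := by
  rw [Finset.sum_comp f (Function.uncurry Sym2.mk)]
  have himg : (univ : Finset (V × V)).image (Function.uncurry Sym2.mk) = univ := by
    apply eq_univ_of_forall
    intro e
    induction e with
    | _ a b => exact mem_image.mpr ⟨(a, b), mem_univ _, rfl⟩
  rw [himg, Finset.mul_sum]
  apply Finset.sum_congr rfl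
  intro e _
  induction e with
  | _ a b =>
    by_cases hab : a = b
    · subst hab; simp [hdiag]
    · have : #{p : V × V | Function.uncurry Sym2.mk p = s(a, b)} = 2 := by
        have hset : ({p : V × V | Function.uncurry Sym2.mk p = s(a, b)} : Finset (V × V))
            = {(a, b), (b, a)} := by
          ext ⟨x, y⟩
          simp only [mem_filter, mem_univ, true_and, mem_insert, mem_singleton, Function.uncurry_apply_pair,
            Prod.mk.injEq]
          constructor
          · intro h
            rcases Sym2.eq_iff.mp h with ⟨h1, h2⟩ | ⟨h1, h2⟩ <;> simp [h1, h2]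
          · rintro (⟨h1, h2⟩ | ⟨h1, h2⟩) <;> subst h1 <;> subst h2
            · rfl
            · exact Sym2.eq_swap
        rw [hset, card_pair]
        simp [Prod.ext_iff]
        exact fun h => absurd h hab
      rw [this]
      ring

/-- For `n = 4s`, `s > 1`, the subtour-LP solution putting weight `1/2` on every edge of
length `1` and weight `1` on every edge of length `n/2` violates the crown inequality:
`Σ_e α(e)·x_e = 12s² − 14s < 12s(s−1) − 2`, where `α(e) = 4s − 6 + j` for an edge of
length `j < n/2` and `α(e) = 2(s−1)` for an edge of length `n/2`. -/
theorem stmt_14 (s : ℕ) (hs : 1 < s) (n : ℕ) [NeZero n] (hn : n = 4 * s)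
    (len : Sym2 (ZMod n) → ℕ)
    (hlen : ∀ u v : ZMod n, len s(u, v) = min (u - v).val (v - u).val)
    (x α : Sym2 (ZMod n) → ℝ)
    (hx : ∀ e, x e = if len e = 1 then 1 / 2 else if len e = n / 2 then 1 else 0)
    (hα : ∀ e, α e = if len e = n / 2 then 2 * ((s : ℝ) - 1)
        else 4 * (s : ℝ) - 6 + len e) :
    (∑ e : Sym2 (ZMod n), α e * x e) = 12 * (s : ℝ) ^ 2 - 14 * s ∧
    12 * (s : ℝ) ^ 2 - 14 * s < 12 * (s : ℝ) * ((s : ℝ) - 1) - 2 := by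
  subst hn
  have hn2 : 4 * s / 2 = 2 * s := by omega
  set G : ℕ → ℝ := fun j => (if j = 2 * s then 2 * ((s : ℝ) - 1)
      else 4 * (s : ℝ) - 6 + j) *
      (if j = 1 then 1 / 2 else if j = 2 * s then 1 else 0) with hG
  have hf : ∀ u v : ZMod (4 * s),
      α s(u, v) * x s(u, v) = G (min (u - v).val (v - u).val) := by
    intro u v
    rw [hα, hx, hlen, hn2, hG]
  have hG0 : G 0 = 0 := by
    rw [hG]
    simp only
    rw [if_neg (show ¬(0 : ℕ) = 1 by omega), if_neg (show ¬(0 : ℕ) = 2 * s by omega),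
      if_neg (show ¬(0 : ℕ) = 2 * s by omega), mul_zero]
  have hdiag : ∀ v : ZMod (4 * s), α s(v, v) * x s(v, v) = 0 := by
    intro v
    rw [hf]
    simpa using hG0
  -- main sum computation
  have hsum : (∑ e : Sym2 (ZMod (4 * s)), α e * x e) = 12 * (s : ℝ) ^ 2 - 14 * s := by
    have h2 : 2 * (∑ e : Sym2 (ZMod (4 * s)), α e * x e)
        = ((4 * s : ℕ) : ℝ) * ∑ k ∈ range (4 * s), G (min ((4 * s - k) % (4 * s)) k) := by
      rw [← double_sum_helper _ hdiag, Fintype.sum_prod_type]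
      have step1 : ∀ u : ZMod (4 * s),
          (∑ v : ZMod (4 * s), α (Function.uncurry Sym2.mk (u, v)) * x (Function.uncurry Sym2.mk (u, v)))
          = ∑ d : ZMod (4 * s), G (min (-d).val d.val) := by
        intro u
        refine (Fintype.sum_equiv (Equiv.addLeft u)
          (fun d => G (min (-d).val d.val))
          (fun v => α (Function.uncurry Sym2.mk (u, v)) * x (Function.uncurry Sym2.mk (u, v))) fun d => ?_).symm
        show G (min (-d).val d.val) = α s(u, u + d) * x s(u, u + d)
        rw [hf]
        congr 1
        rw [sub_add_cancel_left, add_sub_cancel_left]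
      rw [Finset.sum_congr rfl fun u _ => step1 u, Finset.sum_const, card_univ,
        ZMod.card, nsmul_eq_mul]
      congr 1
      refine Finset.sum_nbij' (fun d : ZMod (4 * s) => d.val)
        (fun k : ℕ => (k : ZMod (4 * s))) (fun d _ => mem_range.mpr d.val_lt)
        (fun k _ => mem_univ _) (fun d _ => ZMod.natCast_rightInverse d)
        (fun k hk => ZMod.val_cast_of_lt (mem_range.mp hk)) fun d _ => ?_
      congr 1
      rw [ZMod.neg_val']
    have hrange : (∑ k ∈ range (4 * s), G (min ((4 * s - k) % (4 * s)) k))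
        = 6 * (s : ℝ) - 7 := by
      have key : ∀ k ∈ range (4 * s), G (min ((4 * s - k) % (4 * s)) k)
          = (if k = 1 then (4 * (s : ℝ) - 5) / 2 else 0)
          + (if k = 4 * s - 1 then (4 * (s : ℝ) - 5) / 2 else 0)
          + (if k = 2 * s then 2 * ((s : ℝ) - 1) else 0) := by
        intro k hk
        rw [mem_range] at hk
        by_cases h0 : k = 0
        · subst h0
          rw [Nat.sub_zero, Nat.mod_self]
          simp only [Nat.min_self]  -- min 0 0
          rw [hG0, if_neg (by omega), if_neg (by omega), if_neg (by omega)]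
          norm_num
        · rw [Nat.mod_eq_of_lt (by omega : 4 * s - k < 4 * s)]
          have hm := min_cases (4 * s - k) k
          by_cases h1 : min (4 * s - k) k = 1
          · have hk1 : k = 1 ∨ k = 4 * s - 1 := by omega
            rw [hG]
            simp only
            rw [h1, if_neg (show ¬(1 : ℕ) = 2 * s by omega), if_pos rfl]
            rcases hk1 with rfl | hk1
            · rw [if_pos rfl, if_neg (by omega), if_neg (by omega)]
              push_cast
              ring
            · rw [if_neg (by omega), if_pos hk1, if_neg (by omega)]
              push_cast
              ring
          · by_cases h2 : min (4 * s - k) k = 2 * s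
            · have hk2 : k = 2 * s := by omega
              rw [hG]
              simp only
              rw [h2, if_pos rfl, if_neg (show ¬2 * s = 1 by omega), if_pos rfl,
                if_neg (by omega), if_neg (by omega), if_pos hk2]
              ring
            · rw [hG]
              simp only
              rw [if_neg h1, if_neg h2, if_neg h2, mul_zero,
                if_neg (by omega), if_neg (by omega), if_neg (by omega)]
              norm_num
      rw [Finset.sum_congr rfl key]
      rw [Finset.sum_add_distrib, Finset.sum_add_distrib,
        Finset.sum_ite_eq' (range (4 * s)) 1 (fun _ => (4 * (s : ℝ) - 5) / 2),
        Finset.sum_ite_eq' (range (4 * s)) (4 * s - 1) (fun _ => (4 * (s : ℝ) - 5) / 2),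
        Finset.sum_ite_eq' (range (4 * s)) (2 * s) (fun _ => 2 * ((s : ℝ) - 1)),
        if_pos (mem_range.mpr (by omega)), if_pos (mem_range.mpr (by omega)),
        if_pos (mem_range.mpr (by omega))]
      ring
    rw [hrange] at h2
    push_cast at h2
    linarith
  refine ⟨hsum, ?_⟩
  have hs2 : (2 : ℝ) ≤ (s : ℝ) := by exact_mod_cast hs
  nlinarith
end
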